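/- arXiv:1810.06216 — 3 statements merged into one kernel-verified Lean document; each statement's English description precedes it below -/
import Mathlib

section
/- Let τ = (1-√5)/2, α ≥ 0, λ ≥ 0, γ ∈ ℂ\{0}, and suppose f(z) = z + a₂z² + a₃z³ + … is a bi-univalent function on the unit disk such that both F(z) := 1 + (1/γ)((1-α+2λ)f(z)/z + (α-2λ)f'(z) + λz f''(z) - 1) and the corresponding expression G for g = f⁻¹ are subordinate to p̃(z) = (1+τ²z²)/(1-τz-τ²z²). Then |a₂| ≤ |γ||τ| / √(γτ(1+2α+2λ) + (1-3τ)(1+α)²). -/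
open Metric Set Filter Complex

private lemma itd_coeff {f : ℂ → ℂ} {p : FormalMultilinearSeries ℂ ℂ ℂ}
    (h : HasFPowerSeriesAt f p 0) (n : ℕ) :
    iteratedDeriv n f 0 = n.factorial * p.coeff n := by
  obtain ⟨r, hr⟩ := h
  have h2 := hr.factorial_smul (1 : ℂ) n
  rw [iteratedDeriv, ← h2, FormalMultilinearSeries.coeff, nsmul_eq_mul]
  rfl

private lemma deriv_eqOn' {F G : ℂ → ℂ} (h : ∀ z ∈ Metric.ball (0:ℂ) 1, F z = G z) :
    ∀ z ∈ Metric.ball (0:ℂ) 1, deriv F z = deriv G z := by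
  intro z hz
  apply Filter.EventuallyEq.deriv_eq
  filter_upwards [isOpen_ball.mem_nhds hz] with y hy using h y hy

private lemma mobius_bound {a b : ℂ} (ha : ‖a‖ ≤ 1) (hb : ‖b‖ < 1) :
    ‖(a - b) / (1 - (starRingEnd ℂ) b * a)‖ ≤ 1 := by
  have hden : ‖a - b‖ ^ 2 ≤ ‖1 - (starRingEnd ℂ) b * a‖ ^ 2 := by
    have e1 : ((‖1 - (starRingEnd ℂ) b * a‖ : ℂ)) ^ 2 - ((‖a - b‖ : ℂ)) ^ 2
        = (1 - (‖a‖ : ℂ) ^ 2) * (1 - (‖b‖ : ℂ) ^ 2) := by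
      rw [← Complex.mul_conj', ← Complex.mul_conj', ← Complex.mul_conj',
        ← Complex.mul_conj']
      simp only [map_sub, map_mul, map_one, Complex.conj_conj]
      ring
    have e2 : ‖1 - (starRingEnd ℂ) b * a‖ ^ 2 - ‖a - b‖ ^ 2
        = (1 - ‖a‖ ^ 2) * (1 - ‖b‖ ^ 2) := by
      exact_mod_cast congrArg Complex.re e1
    have h1 : (0:ℝ) ≤ 1 - ‖a‖ ^ 2 := by nlinarith [norm_nonneg a]
    have h2 : (0:ℝ) ≤ 1 - ‖b‖ ^ 2 := by nlinarith [norm_nonneg b]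
    nlinarith [mul_nonneg h1 h2]
  rcases eq_or_ne (1 - (starRingEnd ℂ) b * a) 0 with h0 | h0
  · simp [h0]
  · rw [norm_div, div_le_one (norm_pos_iff.mpr h0)]
    exact (pow_le_pow_iff_left₀ (norm_nonneg _) (norm_nonneg _) two_ne_zero).mp hden

private lemma schwarz2 {w : ℂ → ℂ} (hw : DifferentiableOn ℂ w (Metric.ball (0:ℂ) 1))
    (hw0 : w 0 = 0) (hwb : ∀ z ∈ Metric.ball (0:ℂ) 1, ‖w z‖ < 1) :
    ‖deriv w 0‖ ≤ 1 ∧ ‖deriv (dslope w 0) 0‖ ≤ 1 - ‖deriv w 0‖ ^ 2 := by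
  set s : Set ℂ := Metric.ball (0:ℂ) 1 with hs_def
  have hs : IsOpen s := isOpen_ball
  have h0 : (0:ℂ) ∈ s := mem_ball_self one_pos
  have hmaps : MapsTo w s (ball (w 0) 1) := by
    rw [hw0]
    intro z hz
    exact mem_ball_zero_iff.2 (hwb z hz)
  set φ : ℂ → ℂ := dslope w 0 with hφ_def
  have hφd : DifferentiableOn ℂ φ s :=
    (Complex.differentiableOn_dslope (hs.mem_nhds h0)).mpr hw
  have hφ1 : ∀ z ∈ s, ‖φ z‖ ≤ 1 := by
    intro z hz
    simpa using Complex.norm_dslope_le_div_of_mapsTo_ball hw (hmaps.mono_right ball_subset_closedBall) hz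
  have hφ0 : φ 0 = deriv w 0 := dslope_same w 0
  set c1 : ℂ := deriv w 0 with hc1_def
  have hc1 : ‖c1‖ ≤ 1 := by simpa [hφ0] using hφ1 0 h0
  refine ⟨hc1, ?_⟩
  rcases hc1.lt_or_eq with hlt | heq
  · -- |c1| < 1 : Möbius composition
    have hden : ∀ z ∈ s, (1 - (starRingEnd ℂ) c1 * φ z) ≠ 0 := by
      intro z hz h
      have : ‖(starRingEnd ℂ) c1 * φ z‖ ≤ ‖c1‖ := by
        rw [norm_mul, RCLike.norm_conj]
        calc ‖c1‖ * ‖φ z‖ ≤ ‖c1‖ * 1 := by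
              exact mul_le_mul_of_nonneg_left (hφ1 z hz) (norm_nonneg _)
          _ = ‖c1‖ := mul_one _
      have h1 : (starRingEnd ℂ) c1 * φ z = 1 := by linear_combination -h
      rw [h1, norm_one] at this
      exact absurd (this.trans_lt hlt) (lt_irrefl _)
    set ψ : ℂ → ℂ := fun z => (φ z - c1) / (1 - (starRingEnd ℂ) c1 * φ z) with hψ_def
    have hψd : DifferentiableOn ℂ ψ s := by
      apply DifferentiableOn.div
      · exact hφd.sub (differentiableOn_const _)
      · exact (differentiableOn_const _).sub ((differentiableOn_const _).mul hφd)
      · exact hden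
    have hψ0 : ψ 0 = 0 := by simp [hψ_def, hφ0]
    have hψb : ∀ z ∈ s, ‖ψ z‖ ≤ 1 := fun z hz => mobius_bound (hφ1 z hz) hlt
    have hψder : ‖deriv ψ 0‖ ≤ 1 := by
      refine le_of_forall_pos_le_add fun ε hε => ?_
      have hmaps' : MapsTo ψ s (ball (ψ 0) (1 + ε)) := by
        intro z hz
        rw [hψ0, mem_ball_zero_iff]
        exact lt_of_le_of_lt (hψb z hz) (by linarith)
      have := Complex.norm_deriv_le_div_of_mapsTo_ball hψd (hmaps'.mono_right ball_subset_closedBall) one_pos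
      simpa using this
    -- compute deriv ψ 0
    have hφdiff : DifferentiableAt ℂ φ 0 := hφd.differentiableAt (hs.mem_nhds h0)
    have hdd : deriv ψ 0 = deriv φ 0 / ((1:ℝ) - ‖c1‖ ^ 2 : ℝ) := by
      have d1 : DifferentiableAt ℂ (fun z => φ z - c1) 0 := hφdiff.sub_const _
      have d2 : DifferentiableAt ℂ (fun z => 1 - (starRingEnd ℂ) c1 * φ z) 0 :=
        (differentiableAt_const _).sub ((differentiableAt_const _).mul hφdiff)
      have hden0 : (1 - (starRingEnd ℂ) c1 * φ 0) ≠ 0 := hden 0 h0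
      have hconj : (1:ℂ) - (starRingEnd ℂ) c1 * c1 = ((1 - ‖c1‖ ^ 2 : ℝ) : ℂ) := by
        rw [mul_comm, Complex.mul_conj']
        push_cast
        ring
      have hXne : (((1:ℝ) - ‖c1‖ ^ 2 : ℝ) : ℂ) ≠ 0 := by
        rw [← hconj]
        convert hden0 using 2
        rw [hφ0]
      rw [hψ_def, deriv_fun_div d1 d2 hden0, deriv_sub_const, hφ0, sub_self, zero_mul,
        sub_zero, hconj]
      rw [pow_two ((((1:ℝ) - ‖c1‖ ^ 2 : ℝ)) : ℂ), ← div_div, mul_div_assoc, div_self hXne, mul_one]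
    have hpos : (0:ℝ) < 1 - ‖c1‖ ^ 2 := by nlinarith [norm_nonneg c1]
    rw [hdd, norm_div] at hψder
    have hnc : ‖((1 - ‖c1‖ ^ 2 : ℝ) : ℂ)‖ = 1 - ‖c1‖ ^ 2 := by
      rw [Complex.norm_real, Real.norm_eq_abs, abs_of_pos hpos]
    rw [hnc, div_le_one hpos] at hψder
    simpa using hψder
  · -- |c1| = 1 : maximum principle forces φ constant
    have hmax : IsMaxOn (norm ∘ φ) s 0 := by
      refine isMaxOn_iff.mpr fun z hz => ?_
      simp only [Function.comp_apply, hφ0, heq]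
      exact hφ1 z hz
    have heqon := Complex.eqOn_of_isPreconnected_of_isMaxOn_norm
      (convex_ball (0:ℂ) 1).isPreconnected hs hφd h0 hmax
    have hev : φ =ᶠ[nhds (0:ℂ)] (fun _ => φ 0) := by
      filter_upwards [hs.mem_nhds h0] with z hz using heqon hz
    have : deriv φ 0 = 0 := by
      rw [hev.deriv_eq, deriv_const]
    rw [this, norm_zero, heq]
    norm_num

private lemma dslope_deriv_eq {w : ℂ → ℂ} (hw : AnalyticAt ℂ w 0) :
    deriv (dslope w 0) 0 = iteratedDeriv 2 w 0 / 2 := by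
  obtain ⟨pw, hpw⟩ := hw
  have h1 : iteratedDeriv 2 w 0 = 2 * pw.coeff 2 := by
    simpa using itd_coeff hpw 2
  have h2 := itd_coeff hpw.has_fpower_series_dslope_fslope 1
  rw [iteratedDeriv_one, FormalMultilinearSeries.coeff_fslope] at h2
  rw [h2, h1]
  norm_num [Nat.factorial]



private lemma coeff_eqs
    (τ : ℝ) (hτ2 : τ ^ 2 = τ + 1) (hτneg : τ < 0) (hτgt : -1 < τ)
    (γ : ℂ) (hγ : γ ≠ 0) (α lam : ℝ)
    (f w : ℂ → ℂ)
    (hf : AnalyticOnNhd ℂ f (Metric.ball 0 1)) (hf0 : f 0 = 0) (hf1 : deriv f 0 = 1)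
    (hw : AnalyticOnNhd ℂ w (Metric.ball 0 1)) (hw0 : w 0 = 0)
    (hwb : ∀ z ∈ Metric.ball (0:ℂ) 1, ‖w z‖ < 1)
    (heq : ∀ z ∈ Metric.ball (0:ℂ) 1, z ≠ 0 →
      1 + (1 / γ) * ((1 - (α:ℂ) + 2*(lam:ℂ)) * (f z / z) + ((α:ℂ) - 2*(lam:ℂ)) * deriv f z
        + (lam:ℂ) * z * iteratedDeriv 2 f z - 1)
        = (1 + (τ:ℂ)^2 * (w z)^2) / (1 - (τ:ℂ)*(w z) - (τ:ℂ)^2*(w z)^2)) :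
    (1 + (α:ℂ)) * (iteratedDeriv 2 f 0 / 2) = γ * (τ:ℂ) * deriv w 0 ∧
    (1 + 2*(α:ℂ) + 2*(lam:ℂ)) * (iteratedDeriv 3 f 0 / 6)
      = γ * ((τ:ℂ) * (iteratedDeriv 2 w 0 / 2) + 3 * (τ:ℂ)^2 * (deriv w 0)^2) := by
  have hs : IsOpen (Metric.ball (0:ℂ) 1) := isOpen_ball
  have h0 : (0:ℂ) ∈ Metric.ball (0:ℂ) 1 := mem_ball_self one_pos
  set A : ℂ := 1 - (α:ℂ) + 2*(lam:ℂ) with hA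
  set B : ℂ := (α:ℂ) - 2*(lam:ℂ) with hB
  set L : ℂ := (lam:ℂ) with hL
  set q : ℂ → ℂ := dslope f 0 with hq_def
  -- q is analytic on the ball
  have hq : AnalyticOnNhd ℂ q (Metric.ball (0:ℂ) 1) := by
    intro z hz
    rcases eq_or_ne z 0 with rfl | hz0
    · obtain ⟨pf, hpf⟩ := hf 0 h0
      exact hpf.has_fpower_series_dslope_fslope.analyticAt
    · have h1 : AnalyticAt ℂ (fun y => (f y - f 0) / (y - 0)) z := by
        apply AnalyticAt.div
        · exact (hf z hz).sub analyticAt_const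
        · exact analyticAt_id.sub analyticAt_const
        · simpa using hz0
      apply h1.congr
      filter_upwards [isOpen_compl_singleton.mem_nhds hz0] with y hy
      rw [hq_def, dslope_of_ne f hy, slope_def_field]
  -- power series coefficients of f
  obtain ⟨pf, hpf⟩ := hf 0 h0
  have hqps : HasFPowerSeriesAt q pf.fslope 0 := hpf.has_fpower_series_dslope_fslope
  have hq0 : q 0 = 1 := by rw [hq_def, dslope_same, hf1]
  have hA2 : iteratedDeriv 2 f 0 = 2 * pf.coeff 2 := by
    simpa using itd_coeff hpf 2
  have hA3 : iteratedDeriv 3 f 0 = 6 * pf.coeff 3 := by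
    have := itd_coeff hpf 3
    norm_num [Nat.factorial] at this
    exact this
  have hq1 : deriv q 0 = pf.coeff 2 := by
    have := itd_coeff hqps 1
    simpa [iteratedDeriv_one, FormalMultilinearSeries.coeff_fslope] using this
  have hq2 : deriv (deriv q) 0 = 2 * pf.coeff 3 := by
    have := itd_coeff hqps 2
    rw [iteratedDeriv_succ, iteratedDeriv_one] at this
    simpa [FormalMultilinearSeries.coeff_fslope] using this
  set u : ℂ → ℂ := deriv (deriv f) with hu_def
  have hiu : iteratedDeriv 2 f = u := by
    rw [iteratedDeriv_succ, iteratedDeriv_one]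
  have hf' : AnalyticOnNhd ℂ (deriv f) (Metric.ball (0:ℂ) 1) := hf.deriv
  have hu : AnalyticOnNhd ℂ u (Metric.ball (0:ℂ) 1) := hf'.deriv
  have hu' : AnalyticOnNhd ℂ (deriv u) (Metric.ball (0:ℂ) 1) := hu.deriv
  have hw' : AnalyticOnNhd ℂ (deriv w) (Metric.ball (0:ℂ) 1) := hw.deriv
  have hq' : AnalyticOnNhd ℂ (deriv q) (Metric.ball (0:ℂ) 1) := hq.deriv
  have hu0 : u 0 = 2 * pf.coeff 2 := by rw [← hA2, ← hiu]
  have hu1 : deriv u 0 = 6 * pf.coeff 3 := by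
    rw [← hA3, show (3:ℕ) = 2 + 1 from rfl, iteratedDeriv_succ, hiu]
  -- the three functions
  set E : ℂ → ℂ := fun z => A * q z + B * deriv f z + L * z * u z - 1 with hE_def
  set D : ℂ → ℂ := fun z => 1 - (τ:ℂ) * w z - (τ:ℂ)^2 * (w z)^2 with hD_def
  set N : ℂ → ℂ := fun z => 1 + (τ:ℂ)^2 * (w z)^2 with hN_def
  have hE : AnalyticOnNhd ℂ E (Metric.ball (0:ℂ) 1) := by
    intro z hz
    exact ((((analyticAt_const.mul (hq z hz)).add
      (analyticAt_const.mul (hf' z hz))).add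
      ((analyticAt_const.mul analyticAt_id).mul (hu z hz))).sub analyticAt_const)
  have hD : AnalyticOnNhd ℂ D (Metric.ball (0:ℂ) 1) := by
    intro z hz
    exact ((analyticAt_const.sub (analyticAt_const.mul (hw z hz))).sub
      (analyticAt_const.mul (((hw z hz).mul (hw z hz)).congr
        (by filter_upwards with y using (sq (w y)).symm ▸ rfl))))
  have hN : AnalyticOnNhd ℂ N (Metric.ball (0:ℂ) 1) := by
    intro z hz
    exact (analyticAt_const.add
      (analyticAt_const.mul (((hw z hz).mul (hw z hz)).congr
        (by filter_upwards with y using (sq (w y)).symm ▸ rfl))))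
  have hτ0 : (τ:ℝ) ≠ 0 := ne_of_lt hτneg
  -- D is nonvanishing
  have hDne : ∀ z ∈ Metric.ball (0:ℂ) 1, D z ≠ 0 := by
    intro z hz hzero
    have h1 : ‖(τ:ℂ) * w z + (τ:ℂ)^2 * (w z)^2‖ < 1 := by
      calc ‖(τ:ℂ) * w z + (τ:ℂ)^2 * (w z)^2‖
          ≤ ‖(τ:ℂ) * w z‖ + ‖(τ:ℂ)^2 * (w z)^2‖ := norm_add_le _ _
        _ = |τ| * ‖w z‖ + τ^2 * ‖w z‖^2 := by
            simp [norm_mul, norm_pow, Complex.norm_real, Real.norm_eq_abs, sq_abs]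
        _ < |τ| * 1 + τ^2 * 1 := by
            have h2 := hwb z hz
            have h3 : (0:ℝ) < |τ| := abs_pos.mpr hτ0
            have h4 : (0:ℝ) < τ^2 := by positivity
            have h5 : ‖w z‖^2 < 1 := by nlinarith [norm_nonneg (w z)]
            nlinarith [norm_nonneg (w z)]
        _ = 1 := by rw [abs_of_neg hτneg]; nlinarith
    have h2 : (τ:ℂ) * w z + (τ:ℂ)^2 * (w z)^2 = 1 := by
      have : D z = 1 - ((τ:ℂ) * w z + (τ:ℂ)^2 * (w z)^2) := by rw [hD_def]; ring
      rw [this] at hzero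
      linear_combination -hzero
    rw [h2, norm_one] at h1
    exact lt_irrefl _ h1
  -- the functional equation in polynomial form
  have hED : ∀ z ∈ Metric.ball (0:ℂ) 1, E z * D z = γ * (N z - D z) := by
    intro z hz
    rcases eq_or_ne z 0 with rfl | hz0
    · have hE0 : E 0 = 0 := by
        rw [hE_def]
        simp only [mul_zero, zero_mul, hq0, hf1]
        rw [hA, hB]
        ring
      have : N 0 - D 0 = 0 := by
        rw [hN_def, hD_def]
        simp [hw0]
      rw [hE0, this, zero_mul, mul_zero]
    · have h := heq z hz hz0
      have hq_z : f z / z = q z := by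
        rw [hq_def, dslope_of_ne f hz0, slope_def_field, hf0, sub_zero, sub_zero]
      rw [hq_z, hiu] at h
      have hDz : D z ≠ 0 := hDne z hz
      rw [hE_def, hN_def, hD_def]
      rw [hD_def] at hDz
      field_simp at h
      linear_combination h
  -- first derivatives on the ball
  have hE' : ∀ z ∈ Metric.ball (0:ℂ) 1, deriv E z
      = A * deriv q z + B * u z + (L * u z + L * z * deriv u z) := by
    intro z hz
    rw [hE_def]
    have d1 : DifferentiableAt ℂ (fun z => A * q z) z :=
      (differentiableAt_const _).mul (hq z hz).differentiableAt
    have d2 : DifferentiableAt ℂ (fun z => B * deriv f z) z :=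
      (differentiableAt_const _).mul (hf' z hz).differentiableAt
    have d3 : DifferentiableAt ℂ (fun z => L * z) z :=
      (differentiableAt_const _).mul differentiableAt_id
    have d4 : DifferentiableAt ℂ (fun z => L * z * u z) z :=
      d3.mul (hu z hz).differentiableAt
    rw [deriv_sub_const, deriv_fun_add (d1.fun_add d2) d4, deriv_fun_add d1 d2,
      deriv_const_mul _ (hq z hz).differentiableAt,
      deriv_const_mul _ (hf' z hz).differentiableAt,
      deriv_fun_mul d3 (hu z hz).differentiableAt,
      deriv_const_mul _ differentiableAt_id]
    simp only [deriv_id'', hu_def]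
    ring
  have hD' : ∀ z ∈ Metric.ball (0:ℂ) 1, deriv D z
      = -((τ:ℂ) * deriv w z) - (τ:ℂ)^2 * (deriv w z * w z + w z * deriv w z) := by
    intro z hz
    have hDD : D = fun z => 1 - (τ:ℂ) * w z - (τ:ℂ)^2 * (w z * w z) := by
      funext y; rw [hD_def]; ring
    rw [hDD]
    have d1 : DifferentiableAt ℂ (fun z => (1:ℂ) - (τ:ℂ) * w z) z :=
      (differentiableAt_const _).sub ((differentiableAt_const _).mul (hw z hz).differentiableAt)
    have d2 : DifferentiableAt ℂ (fun z => (τ:ℂ)^2 * (w z * w z)) z :=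
      (differentiableAt_const _).mul ((hw z hz).differentiableAt.mul (hw z hz).differentiableAt)
    rw [deriv_fun_sub d1 d2, deriv_const_sub,
      deriv_const_mul _ (hw z hz).differentiableAt,
      deriv_const_mul _ ((hw z hz).differentiableAt.fun_mul (hw z hz).differentiableAt),
      deriv_fun_mul (hw z hz).differentiableAt (hw z hz).differentiableAt]
  have hN' : ∀ z ∈ Metric.ball (0:ℂ) 1, deriv N z
      = (τ:ℂ)^2 * (deriv w z * w z + w z * deriv w z) := by
    intro z hz
    have hNN : N = fun z => 1 + (τ:ℂ)^2 * (w z * w z) := by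
      funext y; rw [hN_def]; ring
    rw [hNN, deriv_const_add,
      deriv_const_mul _ ((hw z hz).differentiableAt.fun_mul (hw z hz).differentiableAt),
      deriv_fun_mul (hw z hz).differentiableAt (hw z hz).differentiableAt]
  -- jets at 0
  set c1 : ℂ := deriv w 0 with hc1
  set C2 : ℂ := iteratedDeriv 2 w 0 with hC2
  have hC2' : deriv (deriv w) 0 = C2 := by
    rw [hC2, iteratedDeriv_succ, iteratedDeriv_one]
  have hE0 : E 0 = 0 := by
    rw [hE_def]
    simp only [mul_zero, zero_mul, hq0, hf1]
    rw [hA, hB]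
    ring
  have hD0 : D 0 = 1 := by rw [hD_def]; simp [hw0]
  have hN0 : N 0 = 1 := by rw [hN_def]; simp [hw0]
  have hE1 : deriv E 0 = A * pf.coeff 2 + B * (2 * pf.coeff 2) + L * (2 * pf.coeff 2) := by
    rw [hE' 0 h0, hq1, hu0]
    ring
  have hD1 : deriv D 0 = -((τ:ℂ) * c1) := by
    rw [hD' 0 h0, hw0]
    ring
  have hN1 : deriv N 0 = 0 := by
    rw [hN' 0 h0, hw0]
    ring
  -- second derivatives at 0
  have hE2 : deriv (deriv E) 0
      = A * (2 * pf.coeff 3) + B * (6 * pf.coeff 3) + 2 * L * (6 * pf.coeff 3) := by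
    rw [deriv_eqOn' hE' 0 h0]
    have d1 : DifferentiableAt ℂ (fun z => A * deriv q z) 0 :=
      (differentiableAt_const _).mul (hq' 0 h0).differentiableAt
    have d2 : DifferentiableAt ℂ (fun z => B * u z) 0 :=
      (differentiableAt_const _).mul (hu 0 h0).differentiableAt
    have d3 : DifferentiableAt ℂ (fun z => L * u z) 0 :=
      (differentiableAt_const _).mul (hu 0 h0).differentiableAt
    have d4 : DifferentiableAt ℂ (fun z => L * z) 0 :=
      (differentiableAt_const _).mul differentiableAt_id
    have d5 : DifferentiableAt ℂ (fun z => L * z * deriv u z) 0 :=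
      d4.mul (hu' 0 h0).differentiableAt
    rw [deriv_fun_add (d1.fun_add d2) (d3.fun_add d5), deriv_fun_add d1 d2, deriv_fun_add d3 d5,
      deriv_const_mul _ (hq' 0 h0).differentiableAt,
      deriv_const_mul _ (hu 0 h0).differentiableAt,
      deriv_const_mul _ (hu 0 h0).differentiableAt,
      deriv_fun_mul d4 (hu' 0 h0).differentiableAt,
      deriv_const_mul _ differentiableAt_id]
    simp only [deriv_id'']
    rw [hq2, hu1]
    ring
  have hD2 : deriv (deriv D) 0 = -((τ:ℂ) * C2) - 2 * (τ:ℂ)^2 * c1^2 := by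
    rw [deriv_eqOn' hD' 0 h0]
    have dw0 : DifferentiableAt ℂ w 0 := (hw 0 h0).differentiableAt
    have dw'0 : DifferentiableAt ℂ (deriv w) 0 := (hw' 0 h0).differentiableAt
    have d1 : DifferentiableAt ℂ (fun z => (τ:ℂ) * deriv w z) 0 :=
      (differentiableAt_const _).mul dw'0
    have d2 : DifferentiableAt ℂ (fun z => deriv w z * w z) 0 := dw'0.mul dw0
    have d3 : DifferentiableAt ℂ (fun z => w z * deriv w z) 0 := dw0.mul dw'0
    rw [deriv_fun_sub d1.fun_neg ((differentiableAt_const _).fun_mul (d2.fun_add d3)),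
      deriv.fun_neg, deriv_const_mul _ dw'0,
      deriv_const_mul _ (d2.fun_add d3), deriv_fun_add d2 d3,
      deriv_fun_mul dw'0 dw0, deriv_fun_mul dw0 dw'0]
    rw [hw0, hC2']
    ring
  have hN2 : deriv (deriv N) 0 = 2 * (τ:ℂ)^2 * c1^2 := by
    rw [deriv_eqOn' hN' 0 h0]
    have dw0 : DifferentiableAt ℂ w 0 := (hw 0 h0).differentiableAt
    have dw'0 : DifferentiableAt ℂ (deriv w) 0 := (hw' 0 h0).differentiableAt
    have d2 : DifferentiableAt ℂ (fun z => deriv w z * w z) 0 := dw'0.mul dw0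
    have d3 : DifferentiableAt ℂ (fun z => w z * deriv w z) 0 := dw0.mul dw'0
    rw [deriv_const_mul _ (d2.fun_add d3), deriv_fun_add d2 d3,
      deriv_fun_mul dw'0 dw0, deriv_fun_mul dw0 dw'0]
    rw [hw0, hC2']
    ring
  -- derivatives of the two sides of the equation
  have hP' : ∀ z ∈ Metric.ball (0:ℂ) 1, deriv (fun y => E y * D y) z
      = deriv E z * D z + E z * deriv D z := by
    intro z hz
    exact deriv_fun_mul (hE z hz).differentiableAt (hD z hz).differentiableAt
  have hQ' : ∀ z ∈ Metric.ball (0:ℂ) 1, deriv (fun y => γ * (N y - D y)) z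
      = γ * (deriv N z - deriv D z) := by
    intro z hz
    rw [deriv_const_mul _ ((hN z hz).differentiableAt.fun_sub (hD z hz).differentiableAt),
      deriv_fun_sub (hN z hz).differentiableAt (hD z hz).differentiableAt]
  have ord1 : deriv E 0 = γ * ((τ:ℂ) * c1) := by
    have h1 := deriv_eqOn' hED 0 h0
    rw [hP' 0 h0, hQ' 0 h0, hE0, hD0, hN1, hD1] at h1
    linear_combination h1
  have ord2 : deriv (deriv E) 0 + 2 * deriv E 0 * deriv D 0
      = γ * (deriv (deriv N) 0 - deriv (deriv D) 0) := by
    have h1 : ∀ z ∈ Metric.ball (0:ℂ) 1,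
        deriv (fun y => E y * D y) z = deriv (fun y => γ * (N y - D y)) z :=
      deriv_eqOn' hED
    have h2 : ∀ z ∈ Metric.ball (0:ℂ) 1,
        deriv (fun y => deriv E y * D y + E y * deriv D y) z
        = deriv (fun y => γ * (deriv N y - deriv D y)) z := by
      apply deriv_eqOn'
      intro z hz
      rw [← hP' z hz, ← hQ' z hz]
      exact h1 z hz
    have h3 := h2 0 h0
    have dE'0 : DifferentiableAt ℂ (deriv E) 0 := (hE.deriv 0 h0).differentiableAt
    have dD'0 : DifferentiableAt ℂ (deriv D) 0 := (hD.deriv 0 h0).differentiableAt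
    have dN'0 : DifferentiableAt ℂ (deriv N) 0 := (hN.deriv 0 h0).differentiableAt
    have dE0 : DifferentiableAt ℂ E 0 := (hE 0 h0).differentiableAt
    have dD0 : DifferentiableAt ℂ D 0 := (hD 0 h0).differentiableAt
    rw [deriv_fun_add (dE'0.fun_mul dD0) (dE0.fun_mul dD'0), deriv_fun_mul dE'0 dD0,
      deriv_fun_mul dE0 dD'0,
      deriv_const_mul _ (dN'0.fun_sub dD'0), deriv_fun_sub dN'0 dD'0] at h3
    rw [hE0, hD0] at h3
    linear_combination h3
  -- final algebra
  have hfin1 : (1 + (α:ℂ)) * (iteratedDeriv 2 f 0 / 2) = γ * (τ:ℂ) * c1 := by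
    rw [hA2]
    rw [hE1] at ord1
    rw [hA, hB, hL] at ord1
    linear_combination ord1
  refine ⟨hfin1, ?_⟩
  rw [hA3]
  rw [hE1, hE2, hD1, hN2, hD2] at ord2
  rw [hA, hB, hL] at ord2
  rw [hE1, hA, hB, hL] at ord1
  rw [hL]
  linear_combination (1/2 : ℂ) * ord2 + (τ:ℂ) * c1 * ord1

private lemma deriv_eqOnB {r : ℝ} {F G : ℂ → ℂ} (h : ∀ z ∈ Metric.ball (0:ℂ) r, F z = G z) :
    ∀ z ∈ Metric.ball (0:ℂ) r, deriv F z = deriv G z := by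
  intro z hz
  apply Filter.EventuallyEq.deriv_eq
  filter_upwards [isOpen_ball.mem_nhds hz] with y hy using h y hy

private lemma inverse_coeffs
    (f g : ℂ → ℂ)
    (hf : AnalyticOnNhd ℂ f (Metric.ball 0 1))
    (hg : AnalyticOnNhd ℂ g (Metric.ball 0 1))
    (hf0 : f 0 = 0) (hf1 : deriv f 0 = 1)
    (hgf : ∀ z ∈ Metric.ball (0 : ℂ) 1, f z ∈ Metric.ball (0 : ℂ) 1 → g (f z) = z) :
    deriv g 0 = 1 ∧ iteratedDeriv 2 g 0 = -iteratedDeriv 2 f 0 ∧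
      iteratedDeriv 3 g 0 = 3 * (iteratedDeriv 2 f 0)^2 - iteratedDeriv 3 f 0 := by
  have h0 : (0:ℂ) ∈ Metric.ball (0:ℂ) 1 := mem_ball_self one_pos
  -- find a small ball mapped into the unit ball by f
  obtain ⟨r, hr0, hrsub⟩ : ∃ r > 0, Metric.ball (0:ℂ) r ⊆
      Metric.ball (0:ℂ) 1 ∩ f ⁻¹' (Metric.ball (0:ℂ) 1) := by
    have hc : ContinuousAt f 0 := (hf 0 h0).continuousAt
    have h1 : Metric.ball (0:ℂ) 1 ∩ f ⁻¹' (Metric.ball (0:ℂ) 1) ∈ nhds (0:ℂ) := by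
      apply Filter.inter_mem (isOpen_ball.mem_nhds h0)
      apply hc.preimage_mem_nhds
      rw [hf0]
      exact isOpen_ball.mem_nhds h0
    exact Metric.mem_nhds_iff.mp h1
  have htsub : ∀ z ∈ Metric.ball (0:ℂ) r, z ∈ Metric.ball (0:ℂ) 1 :=
    fun z hz => (hrsub hz).1
  have hmap : ∀ z ∈ Metric.ball (0:ℂ) r, f z ∈ Metric.ball (0:ℂ) 1 :=
    fun z hz => (hrsub hz).2
  have h0r : (0:ℂ) ∈ Metric.ball (0:ℂ) r := mem_ball_self hr0
  set G1 : ℂ → ℂ := deriv g with hG1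
  set G2 : ℂ → ℂ := deriv G1 with hG2
  set G3 : ℂ → ℂ := deriv G2 with hG3
  set u : ℂ → ℂ := deriv (deriv f) with hu
  have hG1a : AnalyticOnNhd ℂ G1 (Metric.ball (0:ℂ) 1) := hg.deriv
  have hG2a : AnalyticOnNhd ℂ G2 (Metric.ball (0:ℂ) 1) := hG1a.deriv
  have hG3a : AnalyticOnNhd ℂ G3 (Metric.ball (0:ℂ) 1) := hG2a.deriv
  have hfa' : AnalyticOnNhd ℂ (deriv f) (Metric.ball (0:ℂ) 1) := hf.deriv
  have hua : AnalyticOnNhd ℂ u (Metric.ball (0:ℂ) 1) := hfa'.deriv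
  have hua' : AnalyticOnNhd ℂ (deriv u) (Metric.ball (0:ℂ) 1) := hua.deriv
  -- differentiability packaging at points of the small ball
  have dF : ∀ z ∈ Metric.ball (0:ℂ) r, DifferentiableAt ℂ f z :=
    fun z hz => (hf z (htsub z hz)).differentiableAt
  have dF' : ∀ z ∈ Metric.ball (0:ℂ) r, DifferentiableAt ℂ (deriv f) z :=
    fun z hz => (hfa' z (htsub z hz)).differentiableAt
  have dU : ∀ z ∈ Metric.ball (0:ℂ) r, DifferentiableAt ℂ u z :=
    fun z hz => (hua z (htsub z hz)).differentiableAt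
  have dU' : ∀ z ∈ Metric.ball (0:ℂ) r, DifferentiableAt ℂ (deriv u) z :=
    fun z hz => (hua' z (htsub z hz)).differentiableAt
  have dG1f : ∀ z ∈ Metric.ball (0:ℂ) r, DifferentiableAt ℂ (fun y => G1 (f y)) z :=
    fun z hz => ((hG1a (f z) (hmap z hz)).comp (hf z (htsub z hz))).differentiableAt
  have dG2f : ∀ z ∈ Metric.ball (0:ℂ) r, DifferentiableAt ℂ (fun y => G2 (f y)) z :=
    fun z hz => ((hG2a (f z) (hmap z hz)).comp (hf z (htsub z hz))).differentiableAt
  -- chain rules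
  have hk1 : ∀ z ∈ Metric.ball (0:ℂ) r, deriv (fun y => g (f y)) z
      = G1 (f z) * deriv f z := by
    intro z hz
    exact deriv_comp z (hg (f z) (hmap z hz)).differentiableAt (dF z hz)
  have hk2 : ∀ z ∈ Metric.ball (0:ℂ) r, deriv (fun y => G1 (f y)) z
      = G2 (f z) * deriv f z := by
    intro z hz
    exact deriv_comp z (hG1a (f z) (hmap z hz)).differentiableAt (dF z hz)
  have hk3 : ∀ z ∈ Metric.ball (0:ℂ) r, deriv (fun y => G2 (f y)) z
      = G3 (f z) * deriv f z := by
    intro z hz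
    exact deriv_comp z (hG2a (f z) (hmap z hz)).differentiableAt (dF z hz)
  -- identity g ∘ f = id on the small ball
  have hcomp : ∀ z ∈ Metric.ball (0:ℂ) r, g (f z) = z :=
    fun z hz => hgf z (htsub z hz) (hmap z hz)
  -- first derivative identity
  have key1 : ∀ z ∈ Metric.ball (0:ℂ) r, G1 (f z) * deriv f z = 1 := by
    intro z hz
    have h1 := deriv_eqOnB hcomp z hz
    rw [hk1 z hz] at h1
    rw [h1]
    simp
  have hg1 : deriv g 0 = 1 := by
    have := key1 0 h0r
    rw [hf0, hf1, mul_one] at this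
    exact this
  -- second derivative identity
  have key2 : ∀ z ∈ Metric.ball (0:ℂ) r,
      G2 (f z) * deriv f z * deriv f z + G1 (f z) * u z = 0 := by
    intro z hz
    have h1 := deriv_eqOnB key1 z hz
    rw [deriv_const] at h1
    rw [deriv_fun_mul (dG1f z hz) (dF' z hz), hk2 z hz] at h1
    linear_combination h1
  have hG2v : iteratedDeriv 2 g 0 = G2 0 := by
    rw [iteratedDeriv_succ, iteratedDeriv_one]
  have hU0 : u 0 = iteratedDeriv 2 f 0 := by
    rw [iteratedDeriv_succ, iteratedDeriv_one]
  have hU1 : deriv u 0 = iteratedDeriv 3 f 0 := by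
    rw [show (3:ℕ) = 2 + 1 from rfl, iteratedDeriv_succ, iteratedDeriv_succ,
      iteratedDeriv_one]
  have hG3v : iteratedDeriv 3 g 0 = G3 0 := by
    rw [show (3:ℕ) = 2 + 1 from rfl, iteratedDeriv_succ, iteratedDeriv_succ,
      iteratedDeriv_one]
  have e1 : G1 0 = 1 := hg1
  have hB2 : iteratedDeriv 2 g 0 = -iteratedDeriv 2 f 0 := by
    have h2 := key2 0 h0r
    rw [hf0, hf1, e1, hU0] at h2
    rw [hG2v]
    linear_combination h2
  refine ⟨hg1, hB2, ?_⟩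
  have h1 := deriv_eqOnB key2 0 h0r
  rw [deriv_const] at h1
  rw [deriv_fun_add (((dG2f 0 h0r).fun_mul (dF' 0 h0r)).fun_mul (dF' 0 h0r))
      ((dG1f 0 h0r).fun_mul (dU 0 h0r)),
    deriv_fun_mul ((dG2f 0 h0r).fun_mul (dF' 0 h0r)) (dF' 0 h0r),
    deriv_fun_mul (dG2f 0 h0r) (dF' 0 h0r),
    hk3 0 h0r,
    deriv_fun_mul (dG1f 0 h0r) (dU 0 h0r), hk2 0 h0r] at h1
  have hG2v2 : G2 0 = -iteratedDeriv 2 f 0 := by rw [← hG2v]; exact hB2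
  rw [hf0, hf1, e1, hU0, hU1, hG2v2] at h1
  rw [hG3v]
  have hX : deriv (deriv f) 0 = iteratedDeriv 2 f 0 := hU0
  linear_combination h1 + 2 * iteratedDeriv 2 f 0 * hX

theorem WSL_second_coeff_bound (τ : ℝ) (hτ : τ = (1 - Real.sqrt 5) / 2)
    (γ : ℂ) (hγ : γ ≠ 0) (α lam : ℝ) (hα : 0 ≤ α) (hlam : 0 ≤ lam)
    (f g : ℂ → ℂ)
    (hf : AnalyticOnNhd ℂ f (Metric.ball 0 1))
    (hfi : Set.InjOn f (Metric.ball 0 1))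
    (hf0 : f 0 = 0) (hf1 : deriv f 0 = 1)
    (hg : AnalyticOnNhd ℂ g (Metric.ball 0 1))
    (hgi : Set.InjOn g (Metric.ball 0 1)) (hg0 : g 0 = 0)
    (hgf : ∀ z ∈ Metric.ball (0 : ℂ) 1, f z ∈ Metric.ball (0 : ℂ) 1 → g (f z) = z)
    (hfg : ∀ w ∈ Metric.ball (0 : ℂ) 1, g w ∈ Metric.ball (0 : ℂ) 1 → f (g w) = w)
    (p : ℂ → ℂ)
    (hp : ∀ z : ℂ, p z =
      (1 + (τ : ℂ) ^ 2 * z ^ 2) / (1 - (τ : ℂ) * z - (τ : ℂ) ^ 2 * z ^ 2))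
    (hsubf : ∃ w : ℂ → ℂ, AnalyticOnNhd ℂ w (Metric.ball 0 1) ∧ w 0 = 0 ∧
      (∀ z ∈ Metric.ball (0 : ℂ) 1, ‖w z‖ < 1) ∧
      ∀ z ∈ Metric.ball (0 : ℂ) 1, z ≠ 0 →
        1 + (1 / γ) * ((1 - (α : ℂ) + 2 * (lam : ℂ)) * (f z / z)
          + ((α : ℂ) - 2 * (lam : ℂ)) * deriv f z
          + (lam : ℂ) * z * iteratedDeriv 2 f z - 1) = p (w z))
    (hsubg : ∃ w : ℂ → ℂ, AnalyticOnNhd ℂ w (Metric.ball 0 1) ∧ w 0 = 0 ∧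
      (∀ z ∈ Metric.ball (0 : ℂ) 1, ‖w z‖ < 1) ∧
      ∀ z ∈ Metric.ball (0 : ℂ) 1, z ≠ 0 →
        1 + (1 / γ) * ((1 - (α : ℂ) + 2 * (lam : ℂ)) * (g z / z)
          + ((α : ℂ) - 2 * (lam : ℂ)) * deriv g z
          + (lam : ℂ) * z * iteratedDeriv 2 g z - 1) = p (w z))
    (hR : (γ * (τ : ℂ) * (1 + 2 * (α : ℂ) + 2 * (lam : ℂ))
        + (1 - 3 * (τ : ℂ)) * (1 + (α : ℂ)) ^ 2).im = 0)
    (hRpos : 0 < (γ * (τ : ℂ) * (1 + 2 * (α : ℂ) + 2 * (lam : ℂ))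
        + (1 - 3 * (τ : ℂ)) * (1 + (α : ℂ)) ^ 2).re) :
    ‖iteratedDeriv 2 f 0 / 2‖ ≤ ‖γ‖ * |τ| /
      Real.sqrt ((γ * (τ : ℂ) * (1 + 2 * (α : ℂ) + 2 * (lam : ℂ))
        + (1 - 3 * (τ : ℂ)) * (1 + (α : ℂ)) ^ 2).re) := by
  have h0 : (0:ℂ) ∈ Metric.ball (0:ℂ) 1 := mem_ball_self one_pos
  -- facts about τ
  have h5 : Real.sqrt 5 ^ 2 = 5 := Real.sq_sqrt (by norm_num)
  have h5n : 0 ≤ Real.sqrt 5 := Real.sqrt_nonneg 5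
  have h52 : 2 < Real.sqrt 5 := by nlinarith
  have h53 : Real.sqrt 5 < 3 := by nlinarith
  have hτ2 : τ ^ 2 = τ + 1 := by rw [hτ]; linear_combination (1/4 : ℝ) * h5
  have hτneg : τ < 0 := by rw [hτ]; linarith
  have hτgt : -1 < τ := by rw [hτ]; linarith
  -- unpack subordination data
  obtain ⟨w1, hw1a, hw10, hw1b, hw1e⟩ := hsubf
  obtain ⟨w2, hw2a, hw20, hw2b, hw2e⟩ := hsubg
  have heqf : ∀ z ∈ Metric.ball (0:ℂ) 1, z ≠ 0 →
      1 + (1 / γ) * ((1 - (α:ℂ) + 2*(lam:ℂ)) * (f z / z) + ((α:ℂ) - 2*(lam:ℂ)) * deriv f z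
        + (lam:ℂ) * z * iteratedDeriv 2 f z - 1)
        = (1 + (τ:ℂ)^2 * (w1 z)^2) / (1 - (τ:ℂ)*(w1 z) - (τ:ℂ)^2*(w1 z)^2) := by
    intro z hz hz0
    have := hw1e z hz hz0
    rwa [hp (w1 z)] at this
  have heqg : ∀ z ∈ Metric.ball (0:ℂ) 1, z ≠ 0 →
      1 + (1 / γ) * ((1 - (α:ℂ) + 2*(lam:ℂ)) * (g z / z) + ((α:ℂ) - 2*(lam:ℂ)) * deriv g z
        + (lam:ℂ) * z * iteratedDeriv 2 g z - 1)
        = (1 + (τ:ℂ)^2 * (w2 z)^2) / (1 - (τ:ℂ)*(w2 z) - (τ:ℂ)^2*(w2 z)^2) := by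
    intro z hz hz0
    have := hw2e z hz hz0
    rwa [hp (w2 z)] at this
  -- coefficients of the inverse function
  obtain ⟨hg1, hB2, hB3⟩ := inverse_coeffs f g hf hg hf0 hf1 hgf
  -- the coefficient equations
  obtain ⟨ef1, ef2⟩ := coeff_eqs τ hτ2 hτneg hτgt γ hγ α lam f w1 hf hf0 hf1 hw1a hw10 hw1b heqf
  obtain ⟨eg1, eg2⟩ := coeff_eqs τ hτ2 hτneg hτgt γ hγ α lam g w2 hg hg0 hg1 hw2a hw20 hw2b heqg
  rw [hB2] at eg1
  rw [hB3] at eg2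
  -- Schwarz inequalities for the two Schwarz functions
  obtain ⟨hc1le, hc2le⟩ := schwarz2 (hw1a.differentiableOn) hw10 hw1b
  obtain ⟨hd1le, hd2le⟩ := schwarz2 (hw2a.differentiableOn) hw20 hw2b
  rw [dslope_deriv_eq (hw1a 0 h0)] at hc2le
  rw [dslope_deriv_eq (hw2a 0 h0)] at hd2le
  -- notation
  set A2 : ℂ := iteratedDeriv 2 f 0 with hA2d
  set A3 : ℂ := iteratedDeriv 3 f 0 with hA3d
  set c1 : ℂ := deriv w1 0 with hc1d
  set d1 : ℂ := deriv w2 0 with hd1d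
  set c2 : ℂ := iteratedDeriv 2 w1 0 / 2 with hc2d
  set d2 : ℂ := iteratedDeriv 2 w2 0 / 2 with hd2d
  set T : ℂ := γ * (τ : ℂ) * (1 + 2 * (α : ℂ) + 2 * (lam : ℂ))
      + (1 - 3 * (τ : ℂ)) * (1 + (α : ℂ)) ^ 2 with hT
  -- algebraic combination
  have hd1e : γ * (τ:ℂ) * d1 = -(γ * (τ:ℂ) * c1) := by linear_combination -eg1 - ef1
  have hc1sq : γ^2 * (τ:ℂ)^2 * c1^2 = ((1+(α:ℂ)) * (A2/2))^2 := by
    linear_combination -((1+(α:ℂ)) * (A2/2) + γ * (τ:ℂ) * c1) * ef1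
  have hd1sq : γ^2 * (τ:ℂ)^2 * d1^2 = ((1+(α:ℂ)) * (A2/2))^2 := by
    linear_combination (γ * (τ:ℂ) * d1 - γ * (τ:ℂ) * c1) * hd1e + hc1sq
  have key : 2 * (A2/2)^2 * (T - (1+(α:ℂ))^2) = γ^2 * (τ:ℂ)^2 * (c2 + d2) := by
    rw [hT]
    linear_combination γ * (τ:ℂ) * ef2 + γ * (τ:ℂ) * eg2 + 3 * ((τ:ℂ)) * hc1sq
      + 3 * ((τ:ℂ)) * hd1sq
  -- pass to norms
  have hαn : ‖(1+(α:ℂ))‖ = 1 + α := by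
    have : (1+(α:ℂ)) = (((1+α : ℝ)) : ℂ) := by push_cast; ring
    rw [this, Complex.norm_real, Real.norm_eq_abs]
    exact abs_of_nonneg (by linarith)
  have hef1n : (1+α) * ‖A2/2‖ = ‖γ‖ * |τ| * ‖c1‖ := by
    have h := congrArg norm ef1
    rwa [norm_mul, norm_mul, norm_mul, hαn, Complex.norm_real, Real.norm_eq_abs] at h
  have heg1n : (1+α) * ‖A2/2‖ = ‖γ‖ * |τ| * ‖d1‖ := by
    have h := congrArg norm eg1
    rw [norm_mul, norm_mul, norm_mul, hαn, Complex.norm_real, Real.norm_eq_abs] at h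
    rw [← h, neg_div, norm_neg]
  have hkeyn : 2 * ‖A2/2‖^2 * ‖T - (1+(α:ℂ))^2‖
      ≤ 2 * (‖γ‖ * |τ|)^2 - 2 * ((1+α) * ‖A2/2‖)^2 := by
    have h1 : ‖2 * (A2/2)^2 * (T - (1+(α:ℂ))^2)‖ = 2 * ‖A2/2‖^2 * ‖T - (1+(α:ℂ))^2‖ := by
      rw [norm_mul, norm_mul, norm_pow]
      norm_num
    have h2 : ‖γ^2 * (τ:ℂ)^2 * (c2 + d2)‖ ≤ (‖γ‖ * |τ|)^2 * (‖c2‖ + ‖d2‖) := by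
      rw [norm_mul]
      have e : ‖γ^2 * (τ:ℂ)^2‖ = (‖γ‖ * |τ|)^2 := by
        rw [norm_mul, norm_pow, norm_pow, Complex.norm_real, Real.norm_eq_abs]
        ring
      rw [e]
      exact mul_le_mul_of_nonneg_left (norm_add_le _ _) (by positivity)
    have h3 : ‖c2‖ + ‖d2‖ ≤ 2 - ‖c1‖^2 - ‖d1‖^2 := by linarith
    have h4 : (‖γ‖ * |τ|)^2 * (2 - ‖c1‖^2 - ‖d1‖^2)
        = 2 * (‖γ‖ * |τ|)^2 - ((1+α) * ‖A2/2‖)^2 - ((1+α) * ‖A2/2‖)^2 := by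
      nth_rewrite 2 [heg1n]
      rw [hef1n]
      ring
    have h5' : ‖γ^2 * (τ:ℂ)^2 * (c2 + d2)‖
        ≤ 2 * (‖γ‖ * |τ|)^2 - 2 * ((1+α) * ‖A2/2‖)^2 := by
      calc ‖γ^2 * (τ:ℂ)^2 * (c2 + d2)‖ ≤ (‖γ‖ * |τ|)^2 * (‖c2‖ + ‖d2‖) := h2
        _ ≤ (‖γ‖ * |τ|)^2 * (2 - ‖c1‖^2 - ‖d1‖^2) := by
            apply mul_le_mul_of_nonneg_left h3 (by positivity)
        _ = 2 * (‖γ‖ * |τ|)^2 - 2 * ((1+α) * ‖A2/2‖)^2 := by rw [h4]; ring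
    calc 2 * ‖A2/2‖^2 * ‖T - (1+(α:ℂ))^2‖ = ‖2 * (A2/2)^2 * (T - (1+(α:ℂ))^2)‖ := h1.symm
      _ = ‖γ^2 * (τ:ℂ)^2 * (c2 + d2)‖ := by rw [key]
      _ ≤ 2 * (‖γ‖ * |τ|)^2 - 2 * ((1+α) * ‖A2/2‖)^2 := h5'
  -- real part estimate
  have hXre : T.re - (1+α)^2 ≤ ‖T - (1+(α:ℂ))^2‖ := by
    have e1 : ((1+(α:ℂ))^2) = (((1+α)^2 : ℝ) : ℂ) := by push_cast; ring
    have e2 : (T - (1+(α:ℂ))^2).re = T.re - (1+α)^2 := by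
      rw [Complex.sub_re, e1, Complex.ofReal_re]
    calc T.re - (1+α)^2 = (T - (1+(α:ℂ))^2).re := e2.symm
      _ ≤ ‖T - (1+(α:ℂ))^2‖ := Complex.re_le_norm _
      _ = ‖T - (1+(α:ℂ))^2‖ := rfl
  -- conclude
  have hmain : ‖A2/2‖^2 * T.re ≤ (‖γ‖ * |τ|)^2 := by
    nlinarith [norm_nonneg (A2/2), sq_nonneg ‖A2/2‖,
      mul_le_mul_of_nonneg_left hXre (by positivity : (0:ℝ) ≤ 2 * ‖A2/2‖^2)]
  rw [le_div_iff₀ (Real.sqrt_pos.mpr hRpos)]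
  have hR2 : Real.sqrt T.re ^ 2 = T.re := Real.sq_sqrt hRpos.le
  refine (pow_le_pow_iff_left₀ (by positivity) (by positivity) two_ne_zero).mp ?_
  calc (‖A2/2‖ * Real.sqrt T.re)^2 = ‖A2/2‖^2 * T.re := by rw [mul_pow, hR2]
    _ ≤ (‖γ‖ * |τ|)^2 := hmain
end

section
/- Let τ = (1-√5)/2, 0 ≤ λ ≤ 1, and suppose f(z) = z + a₂z² + a₃z³ + … is bi-univalent with (zf'(z)+λz²f''(z))/((1-λ)f(z)+λzf'(z)) ≺ p̃(z) and the analogous subordination for g = f⁻¹, where p̃(z) = (1+τ²z²)/(1-τz-τ²z²). Then |a₂| ≤ |τ|/√((1+λ)² - 2τ(2λ²+2λ+1)) and |a₃| ≤ |τ|(1-4τ)(1+λ)² / (2(1+2λ)[(1+λ)² - 2τ(2λ²+2λ+1)]). -/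
open Metric Set Filter Topology

section helpers

lemma deriv_eqOn_nhd {A B : ℂ → ℂ} (h : ∀ x ∈ Metric.ball (0:ℂ) 1, A x = B x)
    {z : ℂ} (hz : z ∈ Metric.ball (0:ℂ) 1) : deriv A z = deriv B z :=
  (Filter.eventuallyEq_of_mem (Metric.isOpen_ball.mem_nhds hz) h).deriv_eq

lemma sqrt5_sq : Real.sqrt 5 ^ 2 = 5 := Real.sq_sqrt (by norm_num)
lemma sqrt5_gt : 2 < Real.sqrt 5 := by
  nlinarith [sqrt5_sq, Real.sqrt_nonneg 5]
lemma sqrt5_lt : Real.sqrt 5 < 3 := by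
  nlinarith [sqrt5_sq, Real.sqrt_nonneg 5]

lemma tau_neg {τ : ℝ} (hτ : τ = (1 - Real.sqrt 5) / 2) : τ < 0 := by
  rw [hτ]; nlinarith [sqrt5_gt]

lemma tau_gt_neg_one {τ : ℝ} (hτ : τ = (1 - Real.sqrt 5) / 2) : -1 < τ := by
  rw [hτ]; nlinarith [sqrt5_lt]

lemma tau_identity {τ : ℝ} (hτ : τ = (1 - Real.sqrt 5) / 2) : -τ + τ^2 = 1 := by
  rw [hτ]; nlinarith [sqrt5_sq]

lemma pden_ne {τ : ℝ} (hτ : τ = (1 - Real.sqrt 5) / 2) {u : ℂ} (hu : ‖u‖ < 1) :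
    (1:ℂ) - (τ:ℂ) * u - (τ:ℂ)^2 * u^2 ≠ 0 := by
  intro h
  have h1 : (1:ℂ) = (τ:ℂ)*u + (τ:ℂ)^2*u^2 := by linear_combination h
  have h2 : (1:ℝ) ≤ ‖(τ:ℂ)*u + (τ:ℂ)^2*u^2‖ := by
    rw [← h1]; norm_num
  have h3 : ‖(τ:ℂ)*u + (τ:ℂ)^2*u^2‖ ≤ |τ| * ‖u‖ + τ^2 * ‖u‖^2 := by
    refine (norm_add_le _ _).trans ?_
    rw [norm_mul, norm_mul, norm_pow, norm_pow, Complex.norm_real, Real.norm_eq_abs]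
    rw [← abs_pow, abs_of_nonneg (sq_nonneg τ)]
  have hτn := tau_neg hτ
  have hid := tau_identity hτ
  have hun : 0 ≤ ‖u‖ := norm_nonneg u
  have habs : |τ| = -τ := abs_of_neg hτn
  have hτpos : 0 < |τ| := abs_pos.mpr (ne_of_lt hτn)
  have e1 : |τ| * ‖u‖ < |τ| := by nlinarith
  have e2 : τ^2 * ‖u‖^2 ≤ τ^2 := by nlinarith [sq_nonneg τ]
  linarith [h2.trans h3]

end helpers

lemma normSq_lt_one_of_norm_lt {a : ℂ} (ha : ‖a‖ < 1) : Complex.normSq a < 1 := by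
  rw [Complex.normSq_eq_norm_sq]
  have : ‖a‖ < 1 := ha
  nlinarith [norm_nonneg a]

lemma moebius_norm_lt {a u : ℂ} (ha : ‖a‖ < 1) (hu : ‖u‖ < 1) :
    ‖u - a‖ < ‖1 - (starRingEnd ℂ) a * u‖ := by
  have h1 : Complex.normSq (u - a) < Complex.normSq (1 - (starRingEnd ℂ) a * u) := by
    have ha' := normSq_lt_one_of_norm_lt ha
    have hu' := normSq_lt_one_of_norm_lt hu
    simp only [Complex.normSq_apply, Complex.sub_re, Complex.sub_im, Complex.mul_re,
      Complex.mul_im, Complex.one_re, Complex.one_im, Complex.conj_re, Complex.conj_im] at *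
    nlinarith [sq_nonneg (a.re*u.re + a.im*u.im), sq_nonneg (a.re*u.im - a.im*u.re)]
  have h2 : ‖u - a‖ ^ 2 < ‖1 - (starRingEnd ℂ) a * u‖ ^ 2 := by
    rwa [Complex.sq_norm, Complex.sq_norm]
  exact lt_of_pow_lt_pow_left₀ 2 (norm_nonneg _) h2

lemma schwarzPick_center {φ : ℂ → ℂ} (hφ : DifferentiableOn ℂ φ (ball 0 1))
    (hb : ∀ z ∈ ball (0 : ℂ) 1, ‖φ z‖ ≤ 1) :
    ‖deriv φ 0‖ ≤ 1 - ‖φ 0‖ ^ 2 := by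
  have h0mem : (0 : ℂ) ∈ ball (0 : ℂ) 1 := mem_ball_self one_pos
  by_cases hstrict : ∀ z ∈ ball (0 : ℂ) 1, ‖φ z‖ < 1
  · set a := φ 0 with ha_def
    have ha : ‖a‖ < 1 := hstrict 0 h0mem
    set ψ : ℂ → ℂ := fun z => (φ z - a) / (1 - (starRingEnd ℂ) a * φ z) with hψ_def
    have hden : ∀ z ∈ ball (0 : ℂ) 1, (1 : ℂ) - (starRingEnd ℂ) a * φ z ≠ 0 := by
      intro z hz
      have h : ‖(starRingEnd ℂ) a * φ z‖ < 1 := by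
        rw [norm_mul, RCLike.norm_conj]
        calc ‖a‖ * ‖φ z‖ ≤ ‖a‖ * 1 :=
              mul_le_mul_of_nonneg_left (hb z hz) (norm_nonneg a)
          _ < 1 := by simpa using ha
      intro hcon
      rw [sub_eq_zero] at hcon
      rw [← hcon] at h
      simp at h
    have hψd : DifferentiableOn ℂ ψ (ball 0 1) := by
      apply DifferentiableOn.div
      · exact hφ.sub (differentiableOn_const a)
      · exact (differentiableOn_const (1:ℂ)).sub ((differentiableOn_const _).mul hφ)
      · exact hden
    have hψ0 : ψ 0 = 0 := by simp [hψ_def, ha_def]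
    have hψmaps : MapsTo ψ (ball (0:ℂ) 1) (ball (ψ 0) 1) := by
      intro z hz
      rw [hψ0, mem_ball, dist_zero_right, hψ_def]
      simp only
      rw [norm_div, div_lt_one (norm_pos_iff.mpr (hden z hz))]
      exact moebius_norm_lt ha (hstrict z hz)
    have hsch := Complex.norm_dslope_le_div_of_mapsTo_ball hψd (hψmaps.mono_right ball_subset_closedBall) h0mem
    rw [dslope_same, div_one] at hsch
    have hdiff : DifferentiableAt ℂ φ 0 :=
      hφ.differentiableAt (isOpen_ball.mem_nhds h0mem)
    have hg0 : (1:ℂ) - (starRingEnd ℂ) a * a ≠ 0 := by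
      have := hden 0 h0mem; rwa [← ha_def] at this
    have hsub0 : φ 0 - a = 0 := sub_self a
    have hdψ : deriv ψ 0 = deriv φ 0 / (1 - (starRingEnd ℂ) a * a) := by
      have h1 : DifferentiableAt ℂ (fun z => φ z - a) 0 := hdiff.sub_const a
      have h2 : DifferentiableAt ℂ (fun z => (1:ℂ) - (starRingEnd ℂ) a * φ z) 0 :=
        (differentiableAt_const _).sub ((differentiableAt_const _).mul hdiff)
      rw [hψ_def]
      rw [deriv_fun_div h1 h2 hg0]
      rw [deriv_sub_const, deriv_const_sub, deriv_const_mul _ hdiff]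
      rw [hsub0]
      rw [← ha_def]
      field_simp
      ring
    rw [hdψ, norm_div] at hsch
    have hnorm : ‖(1:ℂ) - (starRingEnd ℂ) a * a‖ = 1 - ‖a‖ ^ 2 := by
      have h3 : (starRingEnd ℂ) a * a = (Complex.normSq a : ℂ) := by
        rw [mul_comm, Complex.mul_conj]
      rw [h3]
      have h4 : ((1:ℂ) - (Complex.normSq a : ℂ)) = ((1 - Complex.normSq a : ℝ) : ℂ) := by
        push_cast; ring
      rw [h4, Complex.norm_real, Real.norm_eq_abs,
        abs_of_nonneg (by nlinarith [normSq_lt_one_of_norm_lt ha])]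
      rw [Complex.normSq_eq_norm_sq]
    rw [div_le_one (norm_pos_iff.mpr hg0)] at hsch
    rw [hnorm] at hsch
    exact hsch
  · push_neg at hstrict
    obtain ⟨z₁, hz₁, h1le⟩ := hstrict
    have heq1 : ‖φ z₁‖ = 1 := le_antisymm (hb z₁ hz₁) h1le
    have hmax : IsMaxOn (norm ∘ φ) (ball 0 1) z₁ := by
      intro z hz
      simp only [Function.comp_apply]
      rw [heq1]
      exact hb z hz
    have hconst := Complex.eqOn_of_isPreconnected_of_isMaxOn_norm
      (convex_ball (0:ℂ) 1).isPreconnected isOpen_ball hφ hz₁ hmax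
    have hφ0 : φ 0 = φ z₁ := hconst h0mem
    have hder : deriv φ 0 = 0 := by
      have hev : φ =ᶠ[𝓝 (0:ℂ)] fun _ => φ z₁ :=
        hconst.eventuallyEq_of_mem (isOpen_ball.mem_nhds h0mem)
      rw [hev.deriv_eq, deriv_const]
    rw [hder, hφ0, heq1]
    simp

lemma schwarz_coeffs {w : ℂ → ℂ} (hw : AnalyticOnNhd ℂ w (ball 0 1)) (h0 : w 0 = 0)
    (hb : ∀ z ∈ ball (0:ℂ) 1, ‖w z‖ < 1) :
    ‖deriv w 0‖ ≤ 1 ∧ ‖iteratedDeriv 2 w 0‖ ≤ 2 * (1 - ‖deriv w 0‖ ^ 2) := by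
  set φ := dslope w 0 with hφ_def
  have h0mem : (0:ℂ) ∈ ball (0:ℂ) 1 := mem_ball_self one_pos
  have hmem : ball (0:ℂ) 1 ∈ 𝓝 (0:ℂ) := isOpen_ball.mem_nhds h0mem
  have hφd : DifferentiableOn ℂ φ (ball 0 1) :=
    (Complex.differentiableOn_dslope hmem).mpr hw.differentiableOn
  have hmaps : MapsTo w (ball (0:ℂ) 1) (ball (w 0) 1) := by
    intro z hz; rw [h0]
    simpa [mem_ball, dist_zero_right] using hb z hz
  have hφb : ∀ z ∈ ball (0:ℂ) 1, ‖φ z‖ ≤ 1 := fun z hz => by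
    simpa using Complex.norm_dslope_le_div_of_mapsTo_ball hw.differentiableOn (hmaps.mono_right ball_subset_closedBall) hz
  have hφ0 : φ 0 = deriv w 0 := dslope_same w 0
  have hφa : AnalyticOnNhd ℂ φ (ball 0 1) := hφd.analyticOnNhd isOpen_ball
  have hwz : ∀ z : ℂ, w z = z * φ z := by
    intro z
    have h := sub_smul_dslope w 0 z
    rw [sub_zero, h0, sub_zero, smul_eq_mul] at h
    exact h.symm
  have hd2 : iteratedDeriv 2 w 0 = 2 * deriv φ 0 := by
    have hderiv : deriv w =ᶠ[𝓝 (0:ℂ)] fun z => φ z + z * deriv φ z := by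
      filter_upwards [hmem] with z hz
      have hφz : DifferentiableAt ℂ φ z := hφd.differentiableAt (isOpen_ball.mem_nhds hz)
      have he : deriv w z = deriv (fun y => y * φ y) z := by
        congr 1; funext y; exact hwz y
      rw [he, deriv_fun_mul differentiableAt_fun_id hφz]
      simp
    rw [iteratedDeriv_succ, iteratedDeriv_one, hderiv.deriv_eq]
    have hφ0' : DifferentiableAt ℂ φ 0 := hφd.differentiableAt hmem
    have hdφ : DifferentiableAt ℂ (deriv φ) 0 := (hφa.deriv 0 h0mem).differentiableAt
    rw [deriv_fun_add hφ0' (differentiableAt_fun_id.fun_mul hdφ)]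
    rw [deriv_fun_mul differentiableAt_fun_id hdφ]
    simp
    ring
  refine ⟨by rw [← hφ0]; exact hφb 0 h0mem, ?_⟩
  rw [hd2, ← hφ0, norm_mul]
  have h2 : ‖(2:ℂ)‖ = 2 := by norm_num
  rw [h2]
  have := schwarzPick_center hφd hφb
  nlinarith [norm_nonneg (deriv φ 0)]


lemma coeff_eqs_s16 {τ lam : ℝ} (hτ : τ = (1 - Real.sqrt 5) / 2)
    {f : ℂ → ℂ} (hf : AnalyticOnNhd ℂ f (Metric.ball 0 1))
    (hf0 : f 0 = 0) (hf1 : deriv f 0 = 1)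
    {p : ℂ → ℂ}
    (hp : ∀ z : ℂ, p z = (1 + (τ:ℂ)^2 * z^2) / (1 - (τ:ℂ)*z - (τ:ℂ)^2*z^2))
    (hsub : ∃ w : ℂ → ℂ, AnalyticOnNhd ℂ w (Metric.ball 0 1) ∧ w 0 = 0 ∧
      (∀ z ∈ Metric.ball (0:ℂ) 1, ‖w z‖ < 1) ∧
      ∀ z ∈ Metric.ball (0:ℂ) 1, z ≠ 0 →
        (z * deriv f z + (lam:ℂ) * z^2 * iteratedDeriv 2 f z) /
          ((1 - (lam:ℂ)) * f z + (lam:ℂ) * z * deriv f z) = p (w z)) :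
    ∃ u1 u2 : ℂ, ‖u1‖ ≤ 1 ∧ ‖u2‖ ≤ 2 * (1 - ‖u1‖^2) ∧
      (1 + (lam:ℂ)) * iteratedDeriv 2 f 0 = 2 * (τ:ℂ) * u1 ∧
      2 * (1 + 2*(lam:ℂ)) * iteratedDeriv 3 f 0 =
        3 * (1 + (lam:ℂ)) * iteratedDeriv 2 f 0 * ((τ:ℂ) * u1)
          + 18 * (τ:ℂ)^2 * u1^2 + 3 * (τ:ℂ) * u2 := by
  obtain ⟨w, hw, hw0, hwb, heqn⟩ := hsub
  have hs : IsOpen (Metric.ball (0:ℂ) 1) := Metric.isOpen_ball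
  have h0s : (0:ℂ) ∈ Metric.ball (0:ℂ) 1 := Metric.mem_ball_self one_pos
  have hsn : Metric.ball (0:ℂ) 1 ∈ 𝓝 (0:ℂ) := hs.mem_nhds h0s
  set s := Metric.ball (0:ℂ) 1
  -- abbreviations
  set t : ℂ := (τ:ℂ) with ht_def
  refine ⟨deriv w 0, iteratedDeriv 2 w 0, (schwarz_coeffs hw hw0 hwb).1,
    (schwarz_coeffs hw hw0 hwb).2, ?_⟩
  -- analytic chains
  have hfa1 : AnalyticOnNhd ℂ (deriv f) s := hf.deriv
  have hfa2 : AnalyticOnNhd ℂ (deriv (deriv f)) s := hfa1.deriv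
  have hfa3 : AnalyticOnNhd ℂ (deriv (deriv (deriv f))) s := hfa2.deriv
  have hwa1 : AnalyticOnNhd ℂ (deriv w) s := hw.deriv
  have hit2 : iteratedDeriv 2 f = deriv (deriv f) := by
    rw [iteratedDeriv_succ, iteratedDeriv_one]
  have hit3 : iteratedDeriv 3 f 0 = deriv (deriv (deriv f)) 0 := by
    rw [iteratedDeriv_succ, hit2]
  have hit2w : iteratedDeriv 2 w 0 = deriv (deriv w) 0 := by
    rw [iteratedDeriv_succ, iteratedDeriv_one]
  -- the building blocks
  set D : ℂ → ℂ := fun z => (1 - (lam:ℂ)) * f z + (lam:ℂ) * z * deriv f z with hD_def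
  set D1 : ℂ → ℂ := fun z => deriv f z + (lam:ℂ) * z * deriv (deriv f) z with hD1_def
  set D2 : ℂ → ℂ := fun z =>
    (1 + (lam:ℂ)) * deriv (deriv f) z + (lam:ℂ) * z * deriv (deriv (deriv f)) z with hD2_def
  have hDa : AnalyticOnNhd ℂ D s :=
    (analyticOnNhd_const.mul hf).add ((analyticOnNhd_const.mul analyticOnNhd_id).mul hfa1)
  have hD1a : AnalyticOnNhd ℂ D1 s :=
    hfa1.add ((analyticOnNhd_const.mul analyticOnNhd_id).mul hfa2)
  have hD2a : AnalyticOnNhd ℂ D2 s :=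
    (analyticOnNhd_const.mul hfa2).add ((analyticOnNhd_const.mul analyticOnNhd_id).mul hfa3)
  have hD2a1 : AnalyticOnNhd ℂ (deriv D2) s := hD2a.deriv
  -- derivative identities
  have hDd : ∀ z ∈ s, deriv D z = D1 z := by
    intro z hz
    have h1 : DifferentiableAt ℂ f z := (hf z hz).differentiableAt
    have h2 : DifferentiableAt ℂ (deriv f) z := (hfa1 z hz).differentiableAt
    have h3 : DifferentiableAt ℂ (fun y => (lam:ℂ) * y) z :=
      (differentiableAt_const _).mul differentiableAt_fun_id
    rw [hD_def]
    rw [deriv_fun_add ((differentiableAt_const _).fun_mul h1) (h3.fun_mul h2)]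
    rw [deriv_const_mul _ h1, deriv_fun_mul h3 h2, deriv_const_mul _ differentiableAt_fun_id]
    simp only [deriv_id'', mul_one, hD1_def]
    ring
  have hD1d : ∀ z ∈ s, deriv D1 z = D2 z := by
    intro z hz
    have h2 : DifferentiableAt ℂ (deriv f) z := (hfa1 z hz).differentiableAt
    have h3 : DifferentiableAt ℂ (deriv (deriv f)) z := (hfa2 z hz).differentiableAt
    have h4 : DifferentiableAt ℂ (fun y => (lam:ℂ) * y) z :=
      (differentiableAt_const _).mul differentiableAt_fun_id
    rw [hD1_def]
    rw [deriv_fun_add h2 (h4.fun_mul h3)]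
    rw [deriv_fun_mul h4 h3, deriv_const_mul _ differentiableAt_fun_id]
    simp only [deriv_id'', mul_one, hD2_def]
    ring
  have hD2d0 : deriv D2 0 = (1 + 2*(lam:ℂ)) * deriv (deriv (deriv f)) 0 := by
    have h3 : DifferentiableAt ℂ (deriv (deriv f)) 0 := (hfa2 0 h0s).differentiableAt
    have h4 : DifferentiableAt ℂ (deriv (deriv (deriv f))) 0 := (hfa3 0 h0s).differentiableAt
    have h5 : DifferentiableAt ℂ (fun y => (lam:ℂ) * y) 0 :=
      (differentiableAt_const _).mul differentiableAt_fun_id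
    rw [hD2_def]
    rw [deriv_fun_add ((differentiableAt_const _).fun_mul h3) (h5.fun_mul h4)]
    rw [deriv_const_mul _ h3, deriv_fun_mul h5 h4, deriv_const_mul _ differentiableAt_fun_id]
    simp only [deriv_id'', mul_one, mul_zero, zero_mul, add_zero]
    ring
  -- values at 0
  have hD0 : D 0 = 0 := by rw [hD_def]; simp [hf0]
  have hD10 : D1 0 = 1 := by rw [hD1_def]; simp [hf1]
  have hD20 : D2 0 = (1 + (lam:ℂ)) * deriv (deriv f) 0 := by rw [hD2_def]; simp
  -- the subordination target P and its numerator/denominator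
  set P : ℂ → ℂ := fun z => p (w z) with hP_def
  set Np : ℂ → ℂ := fun z => 1 + t^2 * (w z)^2 with hNp_def
  set Dp : ℂ → ℂ := fun z => 1 - t * w z - t^2 * (w z)^2 with hDp_def
  have hNpa : AnalyticOnNhd ℂ Np s :=
    analyticOnNhd_const.add (analyticOnNhd_const.mul (hw.pow 2))
  have hDpa : AnalyticOnNhd ℂ Dp s :=
    (analyticOnNhd_const.sub (analyticOnNhd_const.mul hw)).sub
      (analyticOnNhd_const.mul (hw.pow 2))
  have hDpne : ∀ z ∈ s, Dp z ≠ 0 := fun z hz => pden_ne hτ (hwb z hz)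
  have hPs : ∀ z ∈ s, P z = Np z / Dp z := fun z hz => hp (w z)
  have hPa : AnalyticOnNhd ℂ P s := fun z hz =>
    ((hNpa z hz).div (hDpa z hz) (hDpne z hz)).congr
      (Filter.eventuallyEq_of_mem (hs.mem_nhds hz) fun x hx => (hPs x hx).symm)
  have hPa1 : AnalyticOnNhd ℂ (deriv P) s := hPa.deriv
  have hPa2 : AnalyticOnNhd ℂ (deriv (deriv P)) s := hPa1.deriv
  have hwd0 : DifferentiableAt ℂ w 0 := (hw 0 h0s).differentiableAt
  have hw1d0 : DifferentiableAt ℂ (deriv w) 0 := (hwa1 0 h0s).differentiableAt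
  have hP0 : P 0 = 1 := by
    rw [hPs 0 h0s, hNp_def, hDp_def]; simp [hw0]
  have hQ : ∀ z ∈ s, P z * Dp z = Np z := fun z hz => by
    rw [hPs z hz]; exact div_mul_cancel₀ _ (hDpne z hz)
  set Dp1 : ℂ → ℂ := fun z => -(t * deriv w z) - t^2 * (2 * w z * deriv w z) with hDp1_def
  set Np1 : ℂ → ℂ := fun z => t^2 * (2 * w z * deriv w z) with hNp1_def
  have hww : ∀ z ∈ s, deriv (fun y => (w y)^2) z = 2 * w z * deriv w z := by
    intro z hz
    rw [deriv_fun_pow ((hw z hz).differentiableAt) 2]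
    norm_num
  have hDpd : ∀ z ∈ s, deriv Dp z = Dp1 z := by
    intro z hz
    have h1 : DifferentiableAt ℂ w z := (hw z hz).differentiableAt
    rw [hDp_def]
    rw [deriv_fun_sub ((differentiableAt_const _).fun_sub ((differentiableAt_const _).fun_mul h1))
      ((differentiableAt_const _).fun_mul (h1.fun_pow 2))]
    rw [deriv_const_sub, deriv_const_mul _ h1, deriv_const_mul _ (h1.fun_pow 2), hww z hz]
  have hNpd : ∀ z ∈ s, deriv Np z = Np1 z := by
    intro z hz
    have h1 : DifferentiableAt ℂ w z := (hw z hz).differentiableAt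
    rw [hNp_def]
    rw [deriv_const_add, deriv_const_mul _ (h1.fun_pow 2), hww z hz]
  have hDp0 : Dp 0 = 1 := by rw [hDp_def]; simp [hw0]
  have hDp10 : Dp1 0 = -(t * deriv w 0) := by rw [hDp1_def]; simp [hw0]
  have hNp10 : Np1 0 = 0 := by rw [hNp1_def]; simp [hw0]
  -- first equation for P
  have hq1 : ∀ z ∈ s, deriv P z * Dp z + P z * Dp1 z = Np1 z := by
    intro z hz
    have e : deriv (fun y => P y * Dp y) z = deriv Np z := deriv_eqOn_nhd hQ hz
    rw [deriv_fun_mul ((hPa z hz).differentiableAt) ((hDpa z hz).differentiableAt),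
      hDpd z hz, hNpd z hz] at e
    exact e
  have hP1 : deriv P 0 = t * deriv w 0 := by
    have e := hq1 0 h0s
    rw [hDp0, hDp10, hNp10, hP0] at e
    linear_combination e
  -- second equation for P
  have hDp1d0 : deriv Dp1 0 = -(t * deriv (deriv w) 0) - t^2 * (2 * deriv w 0 * deriv w 0) := by
    rw [hDp1_def]
    have h2 : DifferentiableAt ℂ (fun y => 2 * w y) 0 := (differentiableAt_const _).mul hwd0
    rw [deriv_fun_sub ((differentiableAt_const _).fun_mul hw1d0).fun_neg
      ((differentiableAt_const _).fun_mul ((h2.fun_mul hw1d0)))]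
    rw [deriv.fun_neg, deriv_const_mul _ hw1d0, deriv_const_mul _ (h2.fun_mul hw1d0),
      deriv_fun_mul h2 hw1d0, deriv_const_mul _ hwd0]
    simp [hw0]
  have hNp1d0 : deriv Np1 0 = t^2 * (2 * deriv w 0 * deriv w 0) := by
    rw [hNp1_def]
    have h2 : DifferentiableAt ℂ (fun y => 2 * w y) 0 := (differentiableAt_const _).mul hwd0
    rw [deriv_const_mul _ (h2.fun_mul hw1d0), deriv_fun_mul h2 hw1d0, deriv_const_mul _ hwd0]
    simp [hw0]
  have hq2 : deriv (deriv P) 0 * Dp 0 + deriv P 0 * Dp1 0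
      + (deriv P 0 * Dp1 0 + P 0 * deriv Dp1 0) = deriv Np1 0 := by
    have e : deriv (fun y => deriv P y * Dp y + P y * Dp1 y) 0 = deriv Np1 0 :=
      deriv_eqOn_nhd hq1 h0s
    have hDp1a : AnalyticOnNhd ℂ Dp1 s := by
      rw [hDp1_def]
      exact ((analyticOnNhd_const.mul hwa1).neg).sub
        (analyticOnNhd_const.mul ((analyticOnNhd_const.mul hw).mul hwa1))
    rw [deriv_fun_add (((hPa1 0 h0s).differentiableAt).fun_mul ((hDpa 0 h0s).differentiableAt))
      (((hPa 0 h0s).differentiableAt).fun_mul ((hDp1a 0 h0s).differentiableAt)),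
      deriv_fun_mul ((hPa1 0 h0s).differentiableAt) ((hDpa 0 h0s).differentiableAt),
      deriv_fun_mul ((hPa 0 h0s).differentiableAt) ((hDp1a 0 h0s).differentiableAt),
      hDpd 0 h0s] at e
    exact e
  have hP2 : deriv (deriv P) 0 = 6 * t^2 * (deriv w 0)^2 + t * deriv (deriv w) 0 := by
    have e := hq2
    rw [hDp0, hDp10, hP0, hP1, hDp1d0, hNp1d0] at e
    linear_combination e
  -- nonvanishing of D near 0 and the key identity
  have hDne : ∀ᶠ z in 𝓝 (0:ℂ), z ≠ 0 → D z ≠ 0 := by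
    have hdiff : DifferentiableAt ℂ D 0 := (hDa 0 h0s).differentiableAt
    have hcont : ContinuousAt (dslope D 0) 0 := continuousAt_dslope_same.mpr hdiff
    have h1 : dslope D 0 0 ≠ 0 := by
      rw [dslope_same, hDd 0 h0s, hD10]; exact one_ne_zero
    filter_upwards [hcont.eventually_ne h1] with z hne hz0
    have h := sub_smul_dslope D 0 z
    rw [sub_zero, hD0, sub_zero, smul_eq_mul] at h
    rw [← h]
    exact mul_ne_zero hz0 hne
  have hkey : (fun z => z * D1 z) =ᶠ[𝓝 (0:ℂ)] fun z => D z * P z := by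
    filter_upwards [hsn, hDne] with z hz hne
    by_cases h0 : z = 0
    · subst h0; simp [hD0]
    · have heq := heqn z hz h0
      have hnum : z * deriv f z + (lam:ℂ) * z^2 * iteratedDeriv 2 f z = z * D1 z := by
        rw [hit2, hD1_def]; ring
      rw [hnum] at heq
      rw [div_eq_iff (hne h0)] at heq
      rw [heq]; ring
  -- derivative functions of the two sides
  have hLd : ∀ z ∈ s, deriv (fun y => y * D1 y) z = D1 z + z * D2 z := by
    intro z hz
    rw [deriv_fun_mul differentiableAt_fun_id ((hD1a z hz).differentiableAt), hD1d z hz]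
    simp
  have hRd : ∀ z ∈ s, deriv (fun y => D y * P y) z = D1 z * P z + D z * deriv P z := by
    intro z hz
    rw [deriv_fun_mul ((hDa z hz).differentiableAt) ((hPa z hz).differentiableAt), hDd z hz]
  have hM1d : ∀ z ∈ s, deriv (fun y => D1 y + y * D2 y) z = 2 * D2 z + z * deriv D2 z := by
    intro z hz
    rw [deriv_fun_add ((hD1a z hz).differentiableAt)
      (differentiableAt_fun_id.fun_mul ((hD2a z hz).differentiableAt)),
      deriv_fun_mul differentiableAt_fun_id ((hD2a z hz).differentiableAt), hD1d z hz]
    simp; ring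
  have hM2d : ∀ z ∈ s, deriv (fun y => D1 y * P y + D y * deriv P y) z
      = D2 z * P z + D1 z * deriv P z + (D1 z * deriv P z + D z * deriv (deriv P) z) := by
    intro z hz
    rw [deriv_fun_add (((hD1a z hz).differentiableAt).fun_mul ((hPa z hz).differentiableAt))
      (((hDa z hz).differentiableAt).fun_mul ((hPa1 z hz).differentiableAt)),
      deriv_fun_mul ((hD1a z hz).differentiableAt) ((hPa z hz).differentiableAt),
      deriv_fun_mul ((hDa z hz).differentiableAt) ((hPa1 z hz).differentiableAt),
      hD1d z hz, hDd z hz]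
  -- second-order coefficient equation
  have e2nd : deriv (deriv (fun z => z * D1 z)) 0 = deriv (deriv (fun z => D z * P z)) 0 :=
    hkey.deriv.deriv_eq
  have e2L : deriv (deriv (fun z : ℂ => z * D1 z)) 0 = 2 * D2 0 := by
    rw [deriv_eqOn_nhd hLd h0s]
    have := hM1d 0 h0s
    rw [deriv_fun_add ((hD1a 0 h0s).differentiableAt)
      (differentiableAt_fun_id.fun_mul ((hD2a 0 h0s).differentiableAt)),
      deriv_fun_mul differentiableAt_fun_id ((hD2a 0 h0s).differentiableAt), hD1d 0 h0s]
    simp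
    ring
  have e2R : deriv (deriv (fun z => D z * P z)) 0 = D2 0 * P 0 + 2 * (D1 0 * deriv P 0) := by
    rw [deriv_eqOn_nhd hRd h0s]
    rw [deriv_fun_add (((hD1a 0 h0s).differentiableAt).fun_mul ((hPa 0 h0s).differentiableAt))
      (((hDa 0 h0s).differentiableAt).fun_mul ((hPa1 0 h0s).differentiableAt)),
      deriv_fun_mul ((hD1a 0 h0s).differentiableAt) ((hPa 0 h0s).differentiableAt),
      deriv_fun_mul ((hDa 0 h0s).differentiableAt) ((hPa1 0 h0s).differentiableAt),
      hD1d 0 h0s, hDd 0 h0s, hD0]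
    ring
  -- third-order coefficient equation
  have e3 : deriv (deriv (deriv (fun z => z * D1 z))) 0
      = deriv (deriv (deriv (fun z => D z * P z))) 0 :=
    hkey.deriv.deriv.deriv_eq
  have hLe : deriv (fun z : ℂ => z * D1 z) =ᶠ[𝓝 (0:ℂ)] fun y => D1 y + y * D2 y :=
    Filter.eventuallyEq_of_mem hsn hLd
  have hRe : deriv (fun z : ℂ => D z * P z) =ᶠ[𝓝 (0:ℂ)] fun y => D1 y * P y + D y * deriv P y :=
    Filter.eventuallyEq_of_mem hsn hRd
  have e3L : deriv (deriv (deriv (fun z : ℂ => z * D1 z))) 0 = 3 * deriv D2 0 := by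
    rw [hLe.deriv.deriv_eq, deriv_eqOn_nhd hM1d h0s]
    rw [deriv_fun_add ((analyticOnNhd_const.mul hD2a) 0 h0s).differentiableAt
      (differentiableAt_fun_id.fun_mul ((hD2a1 0 h0s).differentiableAt)),
      deriv_const_mul _ ((hD2a 0 h0s).differentiableAt),
      deriv_fun_mul differentiableAt_fun_id ((hD2a1 0 h0s).differentiableAt)]
    simp; ring
  have e3R : deriv (deriv (deriv (fun z => D z * P z))) 0
      = deriv D2 0 * P 0 + 3 * (D2 0 * deriv P 0) + 3 * (D1 0 * deriv (deriv P) 0) := by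
    rw [hRe.deriv.deriv_eq, deriv_eqOn_nhd hM2d h0s]
    have d1 : DifferentiableAt ℂ D2 0 := (hD2a 0 h0s).differentiableAt
    have d2 : DifferentiableAt ℂ P 0 := (hPa 0 h0s).differentiableAt
    have d3 : DifferentiableAt ℂ D1 0 := (hD1a 0 h0s).differentiableAt
    have d4 : DifferentiableAt ℂ (deriv P) 0 := (hPa1 0 h0s).differentiableAt
    have d5 : DifferentiableAt ℂ D 0 := (hDa 0 h0s).differentiableAt
    have d6 : DifferentiableAt ℂ (deriv (deriv P)) 0 := (hPa2 0 h0s).differentiableAt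
    rw [deriv_fun_add ((d1.fun_mul d2).fun_add (d3.fun_mul d4)) ((d3.fun_mul d4).fun_add (d5.fun_mul d6)),
      deriv_fun_add (d1.fun_mul d2) (d3.fun_mul d4), deriv_fun_add (d3.fun_mul d4) (d5.fun_mul d6),
      deriv_fun_mul d1 d2, deriv_fun_mul d3 d4, deriv_fun_mul d5 d6,
      hD1d 0 h0s, hDd 0 h0s, hD0]
    ring
  -- assemble
  have eqn2 : (1 + (lam:ℂ)) * deriv (deriv f) 0 = 2 * t * deriv w 0 := by
    have e := e2nd
    rw [e2L, e2R, hD20, hD10, hP0, hP1] at e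
    linear_combination e
  have eqn3 : 2 * (1 + 2*(lam:ℂ)) * deriv (deriv (deriv f)) 0
      = 3 * (1 + (lam:ℂ)) * deriv (deriv f) 0 * (t * deriv w 0)
        + 18 * t^2 * (deriv w 0)^2 + 3 * t * deriv (deriv w) 0 := by
    have e := e3
    rw [e3L, e3R, hD2d0, hD20, hD10, hP0, hP1, hP2] at e
    linear_combination e
  constructor
  · rw [hit2]; exact eqn2
  · rw [hit2, hit3, hit2w]
    exact eqn3

lemma deriv_eqOn_nhd' {A B : ℂ → ℂ} {U : Set ℂ} (hU : IsOpen U)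
    (h : ∀ x ∈ U, A x = B x) {z : ℂ} (hz : z ∈ U) : deriv A z = deriv B z :=
  (Filter.eventuallyEq_of_mem (hU.mem_nhds hz) h).deriv_eq

lemma inverse_derivs {f g : ℂ → ℂ} (hf : AnalyticOnNhd ℂ f (Metric.ball 0 1))
    (hg : AnalyticOnNhd ℂ g (Metric.ball 0 1))
    (hf0 : f 0 = 0) (hf1 : deriv f 0 = 1)
    (hgf : ∀ z ∈ Metric.ball (0:ℂ) 1, f z ∈ Metric.ball (0:ℂ) 1 → g (f z) = z) :
    deriv g 0 = 1 ∧ iteratedDeriv 2 g 0 = - iteratedDeriv 2 f 0 ∧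
      iteratedDeriv 3 g 0 = 3 * (iteratedDeriv 2 f 0)^2 - iteratedDeriv 3 f 0 := by
  have hs : IsOpen (Metric.ball (0:ℂ) 1) := Metric.isOpen_ball
  have h0s : (0:ℂ) ∈ Metric.ball (0:ℂ) 1 := Metric.mem_ball_self one_pos
  set s := Metric.ball (0:ℂ) 1
  set U : Set ℂ := s ∩ f ⁻¹' s with hU_def
  have hUopen : IsOpen U :=
    (hf.continuousOn).isOpen_inter_preimage hs hs
  have h0U : (0:ℂ) ∈ U := by
    constructor
    · exact h0s
    · simp only [Set.mem_preimage, hf0]; exact h0s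
  have hfmem : ∀ z ∈ U, f z ∈ s := fun z hz => hz.2
  have hUmem : ∀ z ∈ U, z ∈ s := fun z hz => hz.1
  have hcomp : ∀ z ∈ U, g (f z) = z := fun z hz => hgf z hz.1 hz.2
  -- analytic chains
  have hfa1 : AnalyticOnNhd ℂ (deriv f) s := hf.deriv
  have hfa2 : AnalyticOnNhd ℂ (deriv (deriv f)) s := hfa1.deriv
  have hfa3 : AnalyticOnNhd ℂ (deriv (deriv (deriv f))) s := hfa2.deriv
  have hga1 : AnalyticOnNhd ℂ (deriv g) s := hg.deriv
  have hga2 : AnalyticOnNhd ℂ (deriv (deriv g)) s := hga1.deriv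
  have hga3 : AnalyticOnNhd ℂ (deriv (deriv (deriv g))) s := hga2.deriv
  -- level 1
  have hE1 : ∀ z ∈ U, deriv g (f z) * deriv f z = 1 := by
    intro z hz
    have hgd : DifferentiableAt ℂ g (f z) := (hg _ (hfmem z hz)).differentiableAt
    have hfd : DifferentiableAt ℂ f z := (hf _ (hUmem z hz)).differentiableAt
    have h1 : deriv (fun y => g (f y)) z = deriv (fun y => y) z :=
      deriv_eqOn_nhd' hUopen hcomp hz
    rw [deriv_id''] at h1
    have h2 : deriv (fun y => g (f y)) z = deriv g (f z) * deriv f z := by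
      rw [← Function.comp_def g f]
      exact deriv_comp z hgd hfd
    rw [← h2, h1]
  have hdg0 : deriv g 0 = 1 := by
    have := hE1 0 h0U
    rwa [hf0, hf1, mul_one] at this
  -- derivative of z ↦ deriv g (f z) etc.
  have hcompd : ∀ (h : ℂ → ℂ), AnalyticOnNhd ℂ h s → AnalyticOnNhd ℂ (deriv h) s →
      ∀ z ∈ U, deriv (fun y => h (f y)) z = deriv h (f z) * deriv f z := by
    intro h ha hda z hz
    have hgd : DifferentiableAt ℂ h (f z) := (ha _ (hfmem z hz)).differentiableAt
    have hfd : DifferentiableAt ℂ f z := (hf _ (hUmem z hz)).differentiableAt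
    rw [← Function.comp_def h f]
    exact deriv_comp z hgd hfd
  have hdiffcomp : ∀ (h : ℂ → ℂ), AnalyticOnNhd ℂ h s →
      ∀ z ∈ U, DifferentiableAt ℂ (fun y => h (f y)) z := by
    intro h ha z hz
    have hgd : DifferentiableAt ℂ h (f z) := (ha _ (hfmem z hz)).differentiableAt
    have hfd : DifferentiableAt ℂ f z := (hf _ (hUmem z hz)).differentiableAt
    exact DifferentiableAt.comp z hgd hfd
  -- level 2
  have hE2 : ∀ z ∈ U, deriv (deriv g) (f z) * deriv f z * deriv f z
      + deriv g (f z) * deriv (deriv f) z = 0 := by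
    intro z hz
    have hfd : DifferentiableAt ℂ (deriv f) z := (hfa1 _ (hUmem z hz)).differentiableAt
    have h1 : deriv (fun y => deriv g (f y) * deriv f y) z = deriv (fun _ => (1:ℂ)) z :=
      deriv_eqOn_nhd' hUopen hE1 hz
    rw [deriv_const] at h1
    rw [deriv_fun_mul (hdiffcomp (deriv g) hga1 z hz) hfd, hcompd (deriv g) hga1 hga2 z hz] at h1
    exact h1
  have hdg2 : deriv (deriv g) 0 = - deriv (deriv f) 0 := by
    have := hE2 0 h0U
    rw [hf0, hf1, hdg0] at this
    linear_combination this
  -- level 3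
  have hE3 : deriv (deriv (deriv g)) 0 + 3 * (deriv (deriv g) 0 * deriv (deriv f) 0)
      + deriv (deriv (deriv f)) 0 = 0 := by
    have h1 : deriv (fun y => deriv (deriv g) (f y) * deriv f y * deriv f y
        + deriv g (f y) * deriv (deriv f) y) 0 = deriv (fun _ : ℂ => (0:ℂ)) 0 :=
      deriv_eqOn_nhd' hUopen hE2 h0U
    rw [deriv_const] at h1
    have d1 : DifferentiableAt ℂ (fun y => deriv (deriv g) (f y)) 0 := hdiffcomp _ hga2 0 h0U
    have d2 : DifferentiableAt ℂ (deriv f) 0 := (hfa1 0 h0s).differentiableAt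
    have d3 : DifferentiableAt ℂ (fun y => deriv g (f y)) 0 := hdiffcomp _ hga1 0 h0U
    have d4 : DifferentiableAt ℂ (deriv (deriv f)) 0 := (hfa2 0 h0s).differentiableAt
    rw [deriv_fun_add ((d1.fun_mul d2).fun_mul d2) (d3.fun_mul d4),
      deriv_fun_mul (d1.fun_mul d2) d2, deriv_fun_mul d1 d2, deriv_fun_mul d3 d4,
      hcompd (deriv (deriv g)) hga2 hga3 0 h0U, hcompd (deriv g) hga1 hga2 0 h0U] at h1
    rw [hf0, hf1, hdg0] at h1
    linear_combination h1
  have hit2 : ∀ F : ℂ → ℂ, iteratedDeriv 2 F 0 = deriv (deriv F) 0 := by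
    intro F; rw [iteratedDeriv_succ, iteratedDeriv_one]
  have hit3 : ∀ F : ℂ → ℂ, iteratedDeriv 3 F 0 = deriv (deriv (deriv F)) 0 := by
    intro F
    rw [iteratedDeriv_succ, show iteratedDeriv 2 F = deriv (deriv F) by
      rw [iteratedDeriv_succ, iteratedDeriv_one]]
  refine ⟨hdg0, ?_, ?_⟩
  · rw [hit2, hit2]; exact hdg2
  · rw [hit3, hit3, hit2]
    have := hE3
    rw [hdg2] at this
    linear_combination this

set_option maxHeartbeats 1000000 in
lemma final_algebra {τ lam : ℝ} (hτ : τ = (1 - Real.sqrt 5) / 2)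
    (hlam0 : 0 ≤ lam) (hlam1 : lam ≤ 1)
    {f2 f3 u1 u2 v1 v2 : ℂ}
    (hu1 : ‖u1‖ ≤ 1) (hu2 : ‖u2‖ ≤ 2 * (1 - ‖u1‖^2))
    (hv1 : ‖v1‖ ≤ 1) (hv2 : ‖v2‖ ≤ 2 * (1 - ‖v1‖^2))
    (e1 : (1 + (lam:ℂ)) * f2 = 2 * (τ:ℂ) * u1)
    (e2 : 2 * (1 + 2*(lam:ℂ)) * f3
      = 3 * (1 + (lam:ℂ)) * f2 * ((τ:ℂ) * u1) + 18 * (τ:ℂ)^2 * u1^2 + 3 * (τ:ℂ) * u2)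
    (e3 : (1 + (lam:ℂ)) * (-f2) = 2 * (τ:ℂ) * v1)
    (e4 : 2 * (1 + 2*(lam:ℂ)) * (3 * f2^2 - f3)
      = 3 * (1 + (lam:ℂ)) * (-f2) * ((τ:ℂ) * v1) + 18 * (τ:ℂ)^2 * v1^2 + 3 * (τ:ℂ) * v2) :
    ‖f2 / 2‖ ≤ |τ| / Real.sqrt ((1 + lam)^2 - 2*τ*(2*lam^2 + 2*lam + 1)) ∧
    ‖f3 / 6‖ ≤ |τ| * (1 - 4*τ) * (1 + lam)^2 /
      (2*(1 + 2*lam) * ((1 + lam)^2 - 2*τ*(2*lam^2+2*lam+1))) := by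
  have hτn : τ < 0 := tau_neg hτ
  have hτ1 : -1 < τ := tau_gt_neg_one hτ
  set T : ℝ := -τ with hT_def
  have hT0 : 0 < T := by simp [hT_def]; linarith
  have hT1 : T < 1 := by simp [hT_def]; linarith
  have habs : |τ| = T := abs_of_neg hτn
  set m : ℝ := 2*lam^2 + 2*lam + 1 with hm_def
  have hm0 : 0 < m := by positivity
  set Δ : ℝ := (1 + lam)^2 - 2*τ*m with hΔ_def
  have hΔT : Δ = (1 + lam)^2 + 2*m*T := by rw [hΔ_def, hT_def]; ring
  have hΔ0 : 0 < Δ := by rw [hΔT]; positivity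
  have hlam2 : (0:ℝ) < 1 + 2*lam := by linarith
  have hτC : ((τ:ℝ):ℂ) ≠ 0 := Complex.ofReal_ne_zero.mpr (ne_of_lt hτn)
  -- v1 = -u1
  have hv1u : v1 = -u1 := by
    have hsum : 2*(τ:ℂ)*(u1+v1) = 0 := by linear_combination -(e1 + e3)
    have h2 := mul_eq_zero.mp hsum
    rcases h2 with h | h
    · exact absurd h (mul_ne_zero two_ne_zero hτC)
    · linear_combination h
  have hv1n : ‖v1‖ = ‖u1‖ := by rw [hv1u, norm_neg]
  -- key identities
  have e4' : 2 * (1 + 2*(lam:ℂ)) * (3 * f2^2 - f3)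
      = 3 * (1 + (lam:ℂ)) * f2 * ((τ:ℂ) * u1) + 18 * (τ:ℂ)^2 * u1^2 + 3 * (τ:ℂ) * v2 := by
    rw [hv1u] at e4
    linear_combination e4
  have hkey2 : (2 * (2*(lam:ℂ)^2 + 2*(lam:ℂ) + 1)) * f2^2 = -(τ:ℂ) * (u2 + v2) := by
    linear_combination (-(1:ℂ)/3)*e2 + (-(1:ℂ)/3)*e4'
      + (4*(1+(lam:ℂ))*f2 + 6*((τ:ℂ)*u1)) * e1
  have hkey3 : 4 * (1 + 2*(lam:ℂ)) * f3 = 6 * (1 + 2*(lam:ℂ)) * f2^2 + 3*(τ:ℂ)*(u2 - v2) := by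
    linear_combination e2 - e4'
  -- pass to norms
  have hx0 : 0 ≤ ‖f2‖ := norm_nonneg f2
  have n1 : 2*T*‖u1‖ = (1+lam)*‖f2‖ := by
    have h := congrArg norm e1
    rw [norm_mul, norm_mul, norm_mul] at h
    have c1 : ‖(1:ℂ) + (lam:ℂ)‖ = 1 + lam := by
      rw [show (1:ℂ) + (lam:ℂ) = ((1+lam:ℝ):ℂ) by push_cast; ring,
        Complex.norm_real, Real.norm_eq_abs, abs_of_pos (by linarith)]
    have c2 : ‖(2:ℂ)‖ = 2 := by norm_num
    have c3 : ‖((τ:ℝ):ℂ)‖ = T := by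
      rw [Complex.norm_real, Real.norm_eq_abs, habs]
    rw [c1, c2, c3] at h
    linarith [h]
  have n2 : 2*m*‖f2‖^2 ≤ T * (4 - 4*‖u1‖^2) := by
    have h := congrArg norm hkey2
    have c1 : ‖(2 * (2*(lam:ℂ)^2 + 2*(lam:ℂ) + 1)) * f2^2‖ = 2*m*‖f2‖^2 := by
      rw [norm_mul, norm_pow]
      rw [show (2 * (2*(lam:ℂ)^2 + 2*(lam:ℂ) + 1)) = ((2*m:ℝ):ℂ) by rw [hm_def]; push_cast; ring,
        Complex.norm_real, Real.norm_eq_abs, abs_of_pos (by positivity)]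
    have c2 : ‖-(τ:ℂ) * (u2+v2)‖ ≤ T * (4 - 4*‖u1‖^2) := by
      rw [norm_mul, norm_neg, Complex.norm_real, Real.norm_eq_abs, habs]
      have : ‖u2 + v2‖ ≤ 4 - 4*‖u1‖^2 := by
        refine (norm_add_le _ _).trans ?_
        rw [hv1n] at hv2
        linarith
      exact mul_le_mul_of_nonneg_left this hT0.le
    rw [c1] at h
    rw [h]; exact c2
  have hx2 : ‖f2‖^2 * Δ ≤ 4*T^2 := by
    have hsq : (2*T*‖u1‖)^2 = ((1+lam)*‖f2‖)^2 := by rw [n1]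
    have h1 : T * (2*m*‖f2‖^2) ≤ T * (T * (4 - 4*‖u1‖^2)) :=
      mul_le_mul_of_nonneg_left n2 hT0.le
    rw [hΔT]
    nlinarith [h1, hsq]
  have sqrtΔ0 : 0 < Real.sqrt Δ := Real.sqrt_pos.mpr hΔ0
  constructor
  · -- first bound
    rw [norm_div, habs]
    have c2 : ‖(2:ℂ)‖ = 2 := by norm_num
    rw [c2]
    rw [div_le_div_iff₀ (by norm_num) sqrtΔ0]
    have h1 : (‖f2‖ * Real.sqrt Δ)^2 ≤ (T*2)^2 := by
      rw [mul_pow, Real.sq_sqrt hΔ0.le]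
      nlinarith [hx2]
    exact le_of_pow_le_pow_left₀ two_ne_zero (by linarith) h1
  · -- second bound
    have hy0 : 0 ≤ ‖f3‖ := norm_nonneg f3
    have J1 : 4*(1+2*lam)*‖f3‖ ≤ 6*(1+2*lam)*‖f2‖^2 + 12*T := by
      have h := congrArg norm hkey3
      have c1 : ‖4 * (1 + 2*(lam:ℂ)) * f3‖ = 4*(1+2*lam)*‖f3‖ := by
        rw [norm_mul, show (4 * (1 + 2*(lam:ℂ))) = ((4*(1+2*lam):ℝ):ℂ) by push_cast; ring,
          Complex.norm_real, Real.norm_eq_abs, abs_of_pos (by linarith)]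
      have c2 : ‖6 * (1 + 2*(lam:ℂ)) * f2^2 + 3*(τ:ℂ)*(u2 - v2)‖
          ≤ 6*(1+2*lam)*‖f2‖^2 + 12*T := by
        refine (norm_add_le _ _).trans ?_
        have d1 : ‖6 * (1 + 2*(lam:ℂ)) * f2^2‖ = 6*(1+2*lam)*‖f2‖^2 := by
          rw [norm_mul, norm_pow, show (6 * (1 + 2*(lam:ℂ))) = ((6*(1+2*lam):ℝ):ℂ) by
            push_cast; ring, Complex.norm_real, Real.norm_eq_abs, abs_of_pos (by linarith)]
        have d2 : ‖3*(τ:ℂ)*(u2 - v2)‖ ≤ 12*T := by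
          rw [norm_mul, norm_mul, Complex.norm_real, Real.norm_eq_abs, habs]
          have e5 : ‖u2 - v2‖ ≤ 4 := by
            refine (norm_sub_le _ _).trans ?_
            have g1 : ‖u1‖^2 ≥ 0 := sq_nonneg _
            have g2 : ‖v1‖^2 ≥ 0 := sq_nonneg _
            linarith
          have : ‖(3:ℂ)‖ = 3 := by norm_num
          rw [this]
          nlinarith [hT0]
        linarith [d1.le, d2]
      rw [c1] at h
      rw [h]; exact c2
    rw [norm_div, habs]
    have c6 : ‖(6:ℂ)‖ = 6 := by norm_num
    rw [c6]
    rw [div_le_div_iff₀ (by norm_num) (mul_pos (by linarith : (0:ℝ) < 2*(1+2*lam)) hΔ0)]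
    have hfact : T * (1 - 4*τ) * (1+lam)^2 = T * (2*(1+2*lam)*T + Δ) := by
      rw [hΔT, hT_def]; ring
    have K1 : 4*(1+2*lam)*‖f3‖*Δ ≤ (6*(1+2*lam)*‖f2‖^2 + 12*T)*Δ :=
      mul_le_mul_of_nonneg_right J1 hΔ0.le
    have K2 : 6*(1+2*lam)*(‖f2‖^2*Δ) ≤ 6*(1+2*lam)*(4*T^2) :=
      mul_le_mul_of_nonneg_left hx2 (by linarith)
    nlinarith [K1, K2, hfact, hT0, hΔ0, hlam2]


theorem PSL_coeff_bounds (τ : ℝ) (hτ : τ = (1 - Real.sqrt 5) / 2)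
    (lam : ℝ) (hlam0 : 0 ≤ lam) (hlam1 : lam ≤ 1)
    (f g : ℂ → ℂ)
    (hf : AnalyticOnNhd ℂ f (Metric.ball 0 1))
    (hfi : Set.InjOn f (Metric.ball 0 1))
    (hf0 : f 0 = 0) (hf1 : deriv f 0 = 1)
    (hg : AnalyticOnNhd ℂ g (Metric.ball 0 1))
    (hgi : Set.InjOn g (Metric.ball 0 1)) (hg0 : g 0 = 0)
    (hgf : ∀ z ∈ Metric.ball (0 : ℂ) 1, f z ∈ Metric.ball (0 : ℂ) 1 → g (f z) = z)
    (hfg : ∀ w ∈ Metric.ball (0 : ℂ) 1, g w ∈ Metric.ball (0 : ℂ) 1 → f (g w) = w)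
    (p : ℂ → ℂ)
    (hp : ∀ z : ℂ, p z =
      (1 + (τ : ℂ) ^ 2 * z ^ 2) / (1 - (τ : ℂ) * z - (τ : ℂ) ^ 2 * z ^ 2))
    (hsubf : ∃ w : ℂ → ℂ, AnalyticOnNhd ℂ w (Metric.ball 0 1) ∧ w 0 = 0 ∧
      (∀ z ∈ Metric.ball (0 : ℂ) 1, ‖w z‖ < 1) ∧
      ∀ z ∈ Metric.ball (0 : ℂ) 1, z ≠ 0 →
        (z * deriv f z + (lam : ℂ) * z ^ 2 * iteratedDeriv 2 f z) /
          ((1 - (lam : ℂ)) * f z + (lam : ℂ) * z * deriv f z) = p (w z))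
    (hsubg : ∃ w : ℂ → ℂ, AnalyticOnNhd ℂ w (Metric.ball 0 1) ∧ w 0 = 0 ∧
      (∀ z ∈ Metric.ball (0 : ℂ) 1, ‖w z‖ < 1) ∧
      ∀ z ∈ Metric.ball (0 : ℂ) 1, z ≠ 0 →
        (z * deriv g z + (lam : ℂ) * z ^ 2 * iteratedDeriv 2 g z) /
          ((1 - (lam : ℂ)) * g z + (lam : ℂ) * z * deriv g z) = p (w z)) :
    ‖iteratedDeriv 2 f 0 / 2‖ ≤
      |τ| / Real.sqrt ((1 + lam) ^ 2 - 2 * τ * (2 * lam ^ 2 + 2 * lam + 1)) ∧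
    ‖iteratedDeriv 3 f 0 / 6‖ ≤
      |τ| * (1 - 4 * τ) * (1 + lam) ^ 2 /
        (2 * (1 + 2 * lam) * ((1 + lam) ^ 2 - 2 * τ * (2 * lam ^ 2 + 2 * lam + 1))) := by
  obtain ⟨u1, u2, hu1, hu2, ef1, ef2⟩ := coeff_eqs_s16 hτ hf hf0 hf1 hp hsubf
  obtain ⟨hdg0, hg2, hg3⟩ := inverse_derivs hf hg hf0 hf1 hgf
  obtain ⟨v1, v2, hv1, hv2, eg1, eg2⟩ := coeff_eqs_s16 hτ hg hg0 hdg0 hp hsubg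
  rw [hg2] at eg1
  rw [hg2, hg3] at eg2
  exact final_algebra hτ hlam0 hlam1 hu1 hu2 hv1 hv2 ef1 ef2 eg1 eg2
end

section
/- Let τ = (1-√5)/2. The function p̃(z) = (1+τ²z²)/(1-τz-τ²z²) belongs to the class 𝒫(β) with β = √5/10; that is, Re p̃(z) > √5/10 for all z in the open unit disk where p̃ is defined. -/
set_option maxHeartbeats 800000 in
theorem ptilde_re_gt (τ : ℂ) (hτ : τ = ((1 - Real.sqrt 5) / 2 : ℝ))
    (p : ℂ → ℂ)
    (hp : ∀ z : ℂ, p z = (1 + τ ^ 2 * z ^ 2) / (1 - τ * z - τ ^ 2 * z ^ 2)) :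
    ∀ z ∈ Metric.ball (0 : ℂ) 1,
      1 - τ * z - τ ^ 2 * z ^ 2 ≠ 0 → Real.sqrt 5 / 10 < (p z).re := by
  intro z hz hD
  have h5 : Real.sqrt 5 ^ 2 = 5 := Real.sq_sqrt (by norm_num)
  have h5pos : (0:ℝ) < Real.sqrt 5 := Real.sqrt_pos.2 (by norm_num)
  have h5lt : Real.sqrt 5 < 3 := by nlinarith
  have h5gt : 1 < Real.sqrt 5 := by nlinarith
  set t : ℝ := (1 - Real.sqrt 5) / 2 with ht
  set s : ℝ := t ^ 2 with hsdef
  have hst : s = (3 - Real.sqrt 5) / 2 := by rw [hsdef, ht]; nlinarith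
  have hs0 : 0 < s := by rw [hst]; linarith
  have hs1 : s < 1 := by rw [hst]; linarith
  have htt : t ^ 2 = t + 1 := by rw [ht]; nlinarith
  have hτ2 : τ ^ 2 = τ + 1 := by rw [hτ]; exact_mod_cast htt
  have hτs : τ ^ 2 = (s : ℂ) := by rw [hτ, hsdef]; push_cast; ring
  -- coordinates
  set x : ℝ := z.re with hx
  set y : ℝ := z.im with hy
  have hxy : x ^ 2 + y ^ 2 < 1 := by
    have : ‖z‖ < 1 := by
      simpa [Complex.dist_eq] using (Metric.mem_ball.1 hz)
    have h2 : ‖z‖ ^ 2 < 1 := by nlinarith [norm_nonneg z]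
    rw [Complex.sq_norm, Complex.normSq_apply] at h2
    simpa [hx, hy, sq] using h2
  have hx1 : -1 < x := by nlinarith
  have hxlt1 : x < 1 := by nlinarith
  -- factorization and nonvanishing
  have hDeq : 1 - τ * z - τ ^ 2 * z ^ 2 = (1 + z) * (1 - τ ^ 2 * z) := by
    linear_combination z * hτ2
  have h1 : (1 : ℂ) + z ≠ 0 := fun h => hD (by rw [hDeq, h, zero_mul])
  have h2 : (1 : ℂ) - τ ^ 2 * z ≠ 0 := fun h => hD (by rw [hDeq, h, mul_zero])
  -- partial fractions
  have hpf : p z = -1 + (1 + z)⁻¹ + (1 - τ ^ 2 * z)⁻¹ := by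
    rw [hp, hDeq]
    field_simp
    ring_nf
  -- real parts
  have e1 : (((1 : ℂ) + z)⁻¹).re = (1 + x) / ((1 + x) ^ 2 + y ^ 2) := by
    rw [Complex.inv_re, Complex.normSq_apply]
    simp only [Complex.add_re, Complex.add_im, Complex.one_re, Complex.one_im, ← hx, ← hy]
    ring_nf
  have e2 : (((1 : ℂ) - (s : ℂ) * z)⁻¹).re = (1 - s * x) / ((1 - s * x) ^ 2 + (s * y) ^ 2) := by
    rw [Complex.inv_re, Complex.normSq_apply]
    simp only [Complex.sub_re, Complex.sub_im, Complex.mul_re, Complex.mul_im,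
      Complex.one_re, Complex.one_im, Complex.ofReal_re, Complex.ofReal_im, ← hx, ← hy]
    ring_nf
  have hre : (p z).re = -1 + (1 + x) / ((1 + x) ^ 2 + y ^ 2)
      + (1 - s * x) / ((1 - s * x) ^ 2 + (s * y) ^ 2) := by
    rw [hpf, hτs]
    simp only [Complex.add_re, Complex.neg_re, Complex.one_re, e1, e2]
  rw [hre]
  -- bound the two fractions
  have h1x : (0:ℝ) < 1 + x := by linarith
  have hd1 : (0:ℝ) < (1 + x) ^ 2 + y ^ 2 := by nlinarith [pow_pos h1x 2, sq_nonneg y]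
  have hA : (1:ℝ)/2 < (1 + x) / ((1 + x) ^ 2 + y ^ 2) := by
    rw [div_lt_div_iff₀ (by norm_num) hd1]
    nlinarith
  have hsx : s * x < 1 := by nlinarith
  have h1sx : (0:ℝ) < 1 - s * x := by linarith
  have hd2 : (0:ℝ) < (1 - s * x) ^ 2 + (s * y) ^ 2 := by
    nlinarith [pow_pos h1sx 2, sq_nonneg (s * y)]
  have hB : (1:ℝ)/(1 + s) < (1 - s * x) / ((1 - s * x) ^ 2 + (s * y) ^ 2) := by
    rw [div_lt_div_iff₀ (by linarith) hd2]
    nlinarith [mul_pos hs0 (mul_pos (by linarith : (0:ℝ) < 1 - s) h1x),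
      mul_pos (mul_pos hs0 hs0) (by linarith : (0:ℝ) < 1 - x ^ 2 - y ^ 2)]
  have hinv : (1:ℝ)/(1 + s) = (5 + Real.sqrt 5)/10 := by
    rw [hst, div_eq_div_iff (by nlinarith) (by norm_num)]
    linear_combination (1/2 : ℝ) * h5
  have hbeta : Real.sqrt 5 / 10 = -1 + 1/2 + 1/(1 + s) := by rw [hinv]; ring
  rw [hbeta]
  linarith
end
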